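/- arXiv:1104.3316 — 7 statements merged into one kernel-verified Lean document; each statement's English description precedes it below -/
import Mathlib

section
/- There is a bijection between RNA secondary structures of length n (noncrossing partial matchings on [n] with no arc (i,i+1)) and 1-tableaux of length n, i.e., sequences of shapes (λ_0,...,λ_n) with one row each, λ_0 = λ_n = ∅, consecutive shapes differing by adding a square, removing a square, or nothing, and containing no consecutive (add, remove) pair. -/
open Finset Filter Topology Asymptotics

/-- An RNA secondary structure of length `n`: a set of arcs `(i,j)`, `1 ≤ i < j ≤ n`,
which form a partial matching (no shared endpoints), are noncrossing, and contain
no 1-arc `(i,i+1)`. -/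
def IsSecStr (n : ℕ) (A : Finset (ℕ × ℕ)) : Prop :=
  (∀ p ∈ A, 1 ≤ p.1 ∧ p.1 < p.2 ∧ p.2 ≤ n ∧ p.2 ≠ p.1 + 1) ∧
  (∀ p ∈ A, ∀ q ∈ A, p ≠ q →
    p.1 ≠ q.1 ∧ p.1 ≠ q.2 ∧ p.2 ≠ q.1 ∧ p.2 ≠ q.2) ∧
  (∀ p ∈ A, ∀ q ∈ A, ¬ (p.1 < q.1 ∧ q.1 < p.2 ∧ p.2 < q.2))

/-- `s(n)`: the number of RNA secondary structures of length `n`. -/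
noncomputable def secCount (n : ℕ) : ℕ :=
  Nat.card {A : Finset (ℕ × ℕ) // IsSecStr n A}

/-- The diagram graph of a secondary structure: backbone edges `(i,i+1)` together
with the arcs, on vertices `1,…,n`. -/
def diagGraph (n : ℕ) (A : Finset (ℕ × ℕ)) : SimpleGraph ℕ where
  Adj i j := i ≠ j ∧ 1 ≤ i ∧ i ≤ n ∧ 1 ≤ j ∧ j ≤ n ∧
    (j = i + 1 ∨ i = j + 1 ∨ (i, j) ∈ A ∨ (j, i) ∈ A)
  symm := by
    constructor
    rintro i j ⟨h1, h2, h3, h4, h5, h6⟩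
    exact ⟨h1.symm, h4, h5, h2, h3, by tauto⟩
  loopless := by constructor; rintro i ⟨h1, _⟩; exact h1 rfl

/-- The 5'-3' distance of a secondary structure: the graph distance from
vertex `1` to vertex `n` in its diagram. -/
noncomputable def secDist (n : ℕ) (A : Finset (ℕ × ℕ)) : ℕ :=
  (diagGraph n A).dist 1 n

/-- `w(n,d)`: the number of secondary structures of length `n` with 5'-3' distance `d`. -/
noncomputable def wCount (n d : ℕ) : ℕ :=
  Nat.card {A : Finset (ℕ × ℕ) // IsSecStr n A ∧ secDist n A = d}

/-- The dominant singularity `ρ = (3 − √5)/2`. -/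
noncomputable def rho : ℝ := (3 - Real.sqrt 5) / 2

/-- The generating function of RNA secondary structures, in closed form. -/
noncomputable def Sfun (z : ℝ) : ℝ :=
  (1 - z + z ^ 2 - Real.sqrt ((z ^ 2 + z + 1) * (z ^ 2 - 3 * z + 1))) / (2 * z ^ 2)

/-- The bivariate generating function `W(z,u)`, in closed form. -/
noncomputable def Wfun (z u : ℝ) : ℝ :=
  u * z ^ 2 * (Sfun z - 1) /
    ((1 - z * u) ^ 2 - (1 - z * u) * (z * u) ^ 2 * (Sfun z - 1)) + z / (1 - z * u)

/-- `cov A j`: the number of arcs of `A` covering the gap between vertices `j` and `j+1`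
(equivalently, the size of the shape of the associated 1-tableau at that gap). -/
def cov (A : Finset (ℕ × ℕ)) (j : ℕ) : ℕ :=
  (A.filter (fun p => p.1 ≤ j ∧ j < p.2)).card

/-- An irreducible secondary structure: the associated tableau never returns to the
empty shape strictly between the two ends, i.e. every interior gap is covered by an arc. -/
def IsIrr (n : ℕ) (A : Finset (ℕ × ℕ)) : Prop :=
  IsSecStr n A ∧ 2 ≤ n ∧ ∀ j, 1 ≤ j → j ≤ n - 1 → 1 ≤ cov A j

/-- `i(n)`: the number of irreducible secondary structures of length `n`. -/
noncomputable def irrCount (n : ℕ) : ℕ :=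
  Nat.card {A : Finset (ℕ × ℕ) // IsIrr n A}

/-- A 1-tableau of length `n`: a sequence of one-row shapes (row lengths)
`λ_0,…,λ_n` with `λ_0 = λ_n = ∅`, consecutive shapes differing by `+□`, `−□` or
nothing, and with no consecutive `(+□,−□)` pair. -/
def IsTableau (n : ℕ) (l : Fin (n + 1) → ℕ) : Prop :=
  l 0 = 0 ∧ l (Fin.last n) = 0 ∧
  (∀ i : ℕ, ∀ _h : i < n,
    l ⟨i + 1, by omega⟩ = l ⟨i, by omega⟩ + 1 ∨
    l ⟨i + 1, by omega⟩ = l ⟨i, by omega⟩ ∨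
    l ⟨i, by omega⟩ = l ⟨i + 1, by omega⟩ + 1) ∧
  (∀ i : ℕ, ∀ _h : i + 2 ≤ n,
    ¬ (l ⟨i + 1, by omega⟩ = l ⟨i, by omega⟩ + 1 ∧
       l ⟨i + 1, by omega⟩ = l ⟨i + 2, by omega⟩ + 1))

namespace SecTab

attribute [local instance] Classical.propDecidable

/-! ### Paths (abstract Motzkin-like paths with no peak of width 2) -/

/-- Abstract form of a 1-tableau as a function `ℕ → ℕ`. -/
structure Tab (n : ℕ) (L : ℕ → ℕ) : Prop where
  zero : L 0 = 0
  last : L n = 0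
  step : ∀ t, t < n → L (t+1) = L t + 1 ∨ L (t+1) = L t ∨ L t = L (t+1) + 1
  peak : ∀ t, t + 2 ≤ n → ¬ (L (t+1) = L t + 1 ∧ L (t+1) = L (t+2) + 1)

/-- Extend a `Fin (n+1)`-indexed sequence to `ℕ`. -/
def lf (n : ℕ) (l : Fin (n+1) → ℕ) (t : ℕ) : ℕ :=
  if h : t ≤ n then l ⟨t, Nat.lt_succ_of_le h⟩ else 0

lemma lf_eq {n : ℕ} (l : Fin (n+1) → ℕ) {t : ℕ} (h : t ≤ n) :
    lf n l t = l ⟨t, Nat.lt_succ_of_le h⟩ := dif_pos h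

lemma tab_of_isTableau {n : ℕ} {l : Fin (n+1) → ℕ} (hl : IsTableau n l) :
    Tab n (lf n l) := by
  obtain ⟨h0, hn, hstep, hpeak⟩ := hl
  constructor
  · rw [lf_eq l (Nat.zero_le n)]; exact h0
  · rw [lf_eq l (le_refl n)]; exact hn
  · intro t ht
    rw [lf_eq l (by omega : t ≤ n), lf_eq l (by omega : t + 1 ≤ n)]
    exact hstep t ht
  · intro t ht
    rw [lf_eq l (by omega : t ≤ n), lf_eq l (by omega : t + 1 ≤ n),
      lf_eq l (by omega : t + 2 ≤ n)]
    exact hpeak t ht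

/-! ### The coverage sequence of a secondary structure -/

/-- Key counting identity: crossing the gap `k → k+1`, coverage changes by
(number of arcs starting at `k+1`) minus (number of arcs ending at `k+1`). -/
lemma cov_succ (A : Finset (ℕ × ℕ)) (k : ℕ) :
    cov A (k+1) + (A.filter fun p => p.1 ≤ k ∧ p.2 = k+1).card
      = cov A k + (A.filter fun p => p.1 = k+1 ∧ k+1 < p.2).card := by
  simp only [cov, Finset.card_filter]
  rw [← Finset.sum_add_distrib, ← Finset.sum_add_distrib]
  refine Finset.sum_congr rfl fun p _ => ?_
  split_ifs <;> omega

section SecStr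

variable {n : ℕ} {A : Finset (ℕ × ℕ)} (hA : IsSecStr n A)

include hA

lemma starts_card (k : ℕ) :
    (A.filter fun p => p.1 = k+1 ∧ k+1 < p.2).card
      = if ∃ j, (k+1, j) ∈ A then 1 else 0 := by
  split_ifs with h
  · obtain ⟨j, hj⟩ := h
    have : (A.filter fun p => p.1 = k+1 ∧ k+1 < p.2) = {(k+1, j)} := by
      ext q
      simp only [Finset.mem_filter, Finset.mem_singleton]
      constructor
      · rintro ⟨hq, hq1, hq2⟩
        by_contra hne
        exact (hA.2.1 q hq (k+1, j) hj hne).1 hq1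
      · rintro rfl
        exact ⟨hj, rfl, (hA.1 _ hj).2.1⟩
    rw [this, Finset.card_singleton]
  · rw [Finset.card_eq_zero, Finset.filter_eq_empty_iff]
    rintro q hq ⟨hq1, -⟩
    exact h ⟨q.2, by rwa [← hq1, Prod.mk.eta]⟩

lemma ends_card (k : ℕ) :
    (A.filter fun p => p.1 ≤ k ∧ p.2 = k+1).card
      = if ∃ i, (i, k+1) ∈ A then 1 else 0 := by
  split_ifs with h
  · obtain ⟨i, hi⟩ := h
    have : (A.filter fun p => p.1 ≤ k ∧ p.2 = k+1) = {(i, k+1)} := by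
      ext q
      simp only [Finset.mem_filter, Finset.mem_singleton]
      constructor
      · rintro ⟨hq, hq1, hq2⟩
        by_contra hne
        exact (hA.2.1 q hq (i, k+1) hi hne).2.2.2 hq2
      · rintro rfl
        refine ⟨hi, ?_, rfl⟩
        have h' : i < k + 1 := (hA.1 _ hi).2.1
        show i ≤ k
        omega
    rw [this, Finset.card_singleton]
  · rw [Finset.card_eq_zero, Finset.filter_eq_empty_iff]
    rintro q hq ⟨-, hq2⟩
    exact h ⟨q.1, by rwa [← hq2, Prod.mk.eta]⟩

lemma not_both (k : ℕ) :
    ¬ ((∃ j, (k+1, j) ∈ A) ∧ (∃ i, (i, k+1) ∈ A)) := by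
  rintro ⟨⟨j, hj⟩, ⟨i, hi⟩⟩
  have hne : (k+1, j) ≠ (i, k+1) := by
    intro h
    have h1 : k + 1 < j := (hA.1 _ hj).2.1
    have h2 : k + 1 = i := congrArg Prod.fst h
    have h3 : j = k + 1 := congrArg Prod.snd h
    omega
  exact (hA.2.1 _ hj _ hi hne).2.1 rfl

lemma cov_step (k : ℕ) :
    cov A (k+1) + (if ∃ i, (i, k+1) ∈ A then 1 else 0)
      = cov A k + (if ∃ j, (k+1, j) ∈ A then 1 else 0) := by
  rw [← starts_card hA k, ← ends_card hA k]; exact cov_succ A k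

lemma cov_of_up {i j : ℕ} (hp : (i, j) ∈ A) : cov A i = cov A (i-1) + 1 := by
  have hi1 : 1 ≤ i := (hA.1 _ hp).1
  have h := cov_step hA (i-1)
  rw [show i - 1 + 1 = i from by omega] at h
  have hnot : ¬ ∃ a, (a, i) ∈ A := by
    rintro ⟨a, ha⟩
    refine not_both hA (i-1) ?_
    rw [show i - 1 + 1 = i from by omega]
    exact ⟨⟨j, hp⟩, ⟨a, ha⟩⟩
  rw [if_neg hnot, if_pos ⟨j, hp⟩] at h
  omega

lemma cov_of_down {i j : ℕ} (hp : (i, j) ∈ A) : cov A (j-1) = cov A j + 1 := by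
  have hb : 1 ≤ i ∧ i < j ∧ j ≤ n ∧ j ≠ i + 1 := hA.1 _ hp
  have h := cov_step hA (j-1)
  rw [show j - 1 + 1 = j from by omega] at h
  have hnot : ¬ ∃ b, (j, b) ∈ A := by
    rintro ⟨b, hb'⟩
    refine not_both hA (j-1) ?_
    rw [show j - 1 + 1 = j from by omega]
    exact ⟨⟨b, hb'⟩, ⟨i, hp⟩⟩
  rw [if_pos ⟨i, hp⟩, if_neg hnot] at h
  omega

lemma up_exists {k : ℕ} (h : cov A (k+1) = cov A k + 1) : ∃ j, (k+1, j) ∈ A := by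
  by_contra hne
  have hs := cov_step hA k
  rw [if_neg hne] at hs
  split_ifs at hs <;> omega

lemma down_exists {k : ℕ} (h : cov A k = cov A (k+1) + 1) : ∃ i, (i, k+1) ∈ A := by
  by_contra hne
  have hs := cov_step hA k
  rw [if_neg hne] at hs
  split_ifs at hs <;> omega

lemma cov_zero' : cov A 0 = 0 := by
  rw [cov, Finset.card_eq_zero, Finset.filter_eq_empty_iff]
  rintro q hq ⟨hq1, -⟩
  have := (hA.1 _ hq).1; omega

lemma cov_last' {t : ℕ} (ht : n ≤ t) : cov A t = 0 := by
  rw [cov, Finset.card_eq_zero, Finset.filter_eq_empty_iff]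
  rintro q hq ⟨-, hq2⟩
  have := (hA.1 _ hq).2.2.1; omega

lemma tab_cov : Tab n (cov A) := by
  constructor
  · exact cov_zero' hA
  · exact cov_last' hA le_rfl
  · intro t _
    have hs := cov_step hA t
    split_ifs at hs with h1 h2 h2
    · exact absurd ⟨h2, h1⟩ (not_both hA t)
    all_goals omega
  · rintro t ht ⟨h1, h2⟩
    obtain ⟨j, hj⟩ := up_exists hA h1
    obtain ⟨i, hi⟩ := down_exists hA h2
    by_cases he : (t+1, j) = (i, t+2)
    · have h3' : j = t + 2 := congrArg Prod.snd he
      exact (hA.1 _ hj).2.2.2 h3'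
    · have hd : t+1 ≠ i ∧ t+1 ≠ t+2 ∧ j ≠ i ∧ j ≠ t+2 := hA.2.1 _ hj _ hi he
      have hb1 : 1 ≤ t+1 ∧ t+1 < j ∧ j ≤ n ∧ j ≠ t+2 := hA.1 _ hj
      have hb2 : 1 ≤ i ∧ i < t+2 ∧ t+2 ≤ n ∧ t+2 ≠ i+1 := hA.1 _ hi
      exact hA.2.2 _ hi _ hj (show i < t+1 ∧ t+1 < t+2 ∧ t+2 < j by omega)

/-! Coverage around an arc. -/

lemma arc_cov_eq {i j : ℕ} (hp : (i, j) ∈ A) :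
    cov A (i-1) = cov A j ∧
    A.filter (fun q => q.1 ≤ j ∧ j < q.2) = A.filter (fun q => q.1 < i ∧ j < q.2) := by
  have hb : 1 ≤ i ∧ i < j ∧ j ≤ n ∧ j ≠ i + 1 := hA.1 _ hp
  have h1 : A.filter (fun q => q.1 ≤ i - 1 ∧ i - 1 < q.2)
      = A.filter (fun q => q.1 < i ∧ j < q.2) := by
    apply Finset.filter_congr
    intro q hq
    have hqb : 1 ≤ q.1 ∧ q.1 < q.2 ∧ q.2 ≤ n ∧ q.2 ≠ q.1 + 1 := hA.1 _ hq
    constructor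
    · rintro ⟨hx1, hx2⟩
      have hne : q ≠ (i, j) := by
        rintro rfl
        have hx1' : i ≤ i - 1 := hx1
        omega
      have hd : q.1 ≠ i ∧ q.1 ≠ j ∧ q.2 ≠ i ∧ q.2 ≠ j := hA.2.1 _ hq _ hp hne
      have hnc : ¬ (q.1 < i ∧ i < q.2 ∧ q.2 < j) := hA.2.2 _ hq _ hp
      exact ⟨by omega, by omega⟩
    · rintro ⟨hx1, hx2⟩
      exact ⟨by omega, by omega⟩
  have h2 : A.filter (fun q => q.1 ≤ j ∧ j < q.2)
      = A.filter (fun q => q.1 < i ∧ j < q.2) := by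
    apply Finset.filter_congr
    intro q hq
    have hqb : 1 ≤ q.1 ∧ q.1 < q.2 ∧ q.2 ≤ n ∧ q.2 ≠ q.1 + 1 := hA.1 _ hq
    constructor
    · rintro ⟨hx1, hx2⟩
      have hne : q ≠ (i, j) := by
        rintro rfl
        have hx2' : j < j := hx2
        omega
      have hd : i ≠ q.1 ∧ i ≠ q.2 ∧ j ≠ q.1 ∧ j ≠ q.2 := hA.2.1 _ hp _ hq hne.symm
      have hnc : ¬ (i < q.1 ∧ q.1 < j ∧ j < q.2) := hA.2.2 _ hp _ hq
      exact ⟨by omega, by omega⟩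
    · rintro ⟨hx1, hx2⟩
      exact ⟨by omega, by omega⟩
  exact ⟨by rw [cov, cov, h1, h2], h2⟩

lemma arc_cov_mid {i j : ℕ} (hp : (i, j) ∈ A) {k : ℕ} (hk1 : i ≤ k) (hk2 : k < j) :
    cov A j < cov A k := by
  have hb : 1 ≤ i ∧ i < j ∧ j ≤ n ∧ j ≠ i + 1 := hA.1 _ hp
  have h2 := (arc_cov_eq hA hp).2
  have hsub : insert (i, j) (A.filter (fun q => q.1 < i ∧ j < q.2))
      ⊆ A.filter (fun q => q.1 ≤ k ∧ k < q.2) := by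
    intro q hq
    rcases Finset.mem_insert.mp hq with rfl | hq
    · simp only [Finset.mem_filter]
      exact ⟨hp, hk1, hk2⟩
    · rw [Finset.mem_filter] at hq ⊢
      obtain ⟨hqA, hq1, hq2⟩ := hq
      exact ⟨hqA, by omega, by omega⟩
  have hni : (i, j) ∉ A.filter (fun q => q.1 < i ∧ j < q.2) := by
    simp only [Finset.mem_filter]
    rintro ⟨-, h, -⟩
    exact absurd h (lt_irrefl i)
  have h3 : cov A j + 1 ≤ cov A k := by
    calc cov A j + 1
        = (insert (i, j) (A.filter fun q => q.1 < i ∧ j < q.2)).card := by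
          rw [Finset.card_insert_of_notMem hni, cov, h2]
      _ ≤ (A.filter fun q => q.1 ≤ k ∧ k < q.2).card := Finset.card_le_card hsub
      _ = cov A k := rfl
  omega

lemma mem_of_conds {i j : ℕ} (hi : 1 ≤ i) (hij : i < j)
    (hup : cov A i = cov A (i-1) + 1)
    (heq : cov A j = cov A (i-1))
    (hmid : ∀ m, i ≤ m → m < j → cov A j < cov A m) : (i, j) ∈ A := by
  obtain ⟨b, hb⟩ := up_exists hA (k := i - 1)
    (by rw [show i - 1 + 1 = i from by omega]; exact hup)
  rw [show i - 1 + 1 = i from by omega] at hb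
  have hbb : 1 ≤ i ∧ i < b ∧ b ≤ n ∧ b ≠ i + 1 := hA.1 _ hb
  have hbeq := (arc_cov_eq hA hb).1
  rcases lt_trichotomy b j with h | h | h
  · have := hmid b (by omega) h
    omega
  · rwa [h] at hb
  · have := arc_cov_mid hA hb (k := j) (by omega) h
    omega

end SecStr

/-! ### From paths to secondary structures -/

/-- The set of arcs associated to a path: `(i,j)` is an arc iff the path steps up
at `i`, down at `j`, and stays strictly above level `L j = L (i-1)` in between. -/
def Gset (n : ℕ) (L : ℕ → ℕ) : Finset (ℕ × ℕ) :=
  (Finset.Icc 1 n ×ˢ Finset.Icc 1 n).filter fun p =>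
    p.1 < p.2 ∧ L p.1 = L (p.1 - 1) + 1 ∧ L (p.2 - 1) = L p.2 + 1 ∧
    L p.2 = L (p.1 - 1) ∧ ∀ m ∈ Finset.Ico p.1 p.2, L p.2 < L m

lemma mem_Gset {n : ℕ} {L : ℕ → ℕ} {i j : ℕ} :
    (i, j) ∈ Gset n L ↔
      1 ≤ i ∧ j ≤ n ∧ i < j ∧ L i = L (i-1) + 1 ∧ L (j-1) = L j + 1 ∧
      L j = L (i-1) ∧ ∀ m, i ≤ m → m < j → L j < L m := by
  simp only [Gset, Finset.mem_filter, Finset.mem_product, Finset.mem_Icc,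
    Finset.mem_Ico]
  constructor
  · rintro ⟨⟨⟨hi1, hi2⟩, hj1, hj2⟩, hlt, h1, h2, h3, h4⟩
    exact ⟨hi1, hj2, hlt, h1, h2, h3, fun m hm1 hm2 => h4 m ⟨hm1, hm2⟩⟩
  · rintro ⟨hi1, hj2, hlt, h1, h2, h3, h4⟩
    exact ⟨⟨⟨hi1, by omega⟩, by omega, hj2⟩, hlt, h1, h2, h3,
      fun m hm => h4 m hm.1 hm.2⟩

section TabSide

variable {n : ℕ} {L : ℕ → ℕ} (hT : Tab n L)

include hT

lemma Gset_secStr : IsSecStr n (Gset n L) := by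
  refine ⟨?_, ?_, ?_⟩
  · rintro ⟨i, j⟩ hp
    rw [mem_Gset] at hp
    obtain ⟨hi1, hj2, hlt, h1, h2, h3, h4⟩ := hp
    refine ⟨hi1, hlt, hj2, ?_⟩
    intro hji
    have hji' : j = i + 1 := hji
    subst hji'
    have := hT.peak (i-1) (by omega)
    rw [show i - 1 + 1 = i from by omega, show i - 1 + 2 = i + 1 from by omega] at this
    rw [show i + 1 - 1 = i from by omega] at h2
    exact this ⟨h1, h2⟩
  · rintro ⟨a, b⟩ hp ⟨c, d⟩ hq hne
    rw [mem_Gset] at hp hq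
    obtain ⟨ha1, hb2, hab, hp1, hp2, hp3, hp4⟩ := hp
    obtain ⟨hc1, hd2, hcd, hq1, hq2, hq3, hq4⟩ := hq
    refine ⟨fun h => ?_, fun h => ?_, fun h => ?_, fun h => ?_⟩
    · have hac : a = c := h
      subst hac
      have hbd : b ≠ d := fun h' => hne (by rw [h'])
      rcases lt_or_gt_of_ne hbd with h' | h'
      · have := hq4 b (by omega) h'; omega
      · have := hp4 d (by omega) h'; omega
    · have had : a = d := h
      subst had
      omega
    · have hbc : b = c := h
      subst hbc
      omega
    · have hbd : b = d := h
      subst hbd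
      have hac : a ≠ c := fun h' => hne (by rw [h'])
      rcases lt_or_gt_of_ne hac with h' | h'
      · have := hp4 (c-1) (by omega) (by omega); omega
      · have := hq4 (a-1) (by omega) (by omega); omega
  · rintro ⟨a, b⟩ hp ⟨c, d⟩ hq ⟨h1, h2, h3⟩
    rw [mem_Gset] at hp hq
    obtain ⟨ha1, hb2, hab, hp1, hp2, hp3, hp4⟩ := hp
    obtain ⟨hc1, hd2, hcd, hq1, hq2, hq3, hq4⟩ := hq
    have h1' : a < c := h1
    have h2' : c < b := h2
    have h3' : b < d := h3
    have e1 := hq4 b (by omega) (by omega)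
    have e2 := hp4 (c-1) (by omega) (by omega)
    omega

lemma Gset_up_exists {k : ℕ} (hk : 1 ≤ k) (hkn : k ≤ n) (hup : L k = L (k-1) + 1) :
    ∃ j, (k, j) ∈ Gset n L := by
  have hkn' : k < n := by
    rcases eq_or_lt_of_le hkn with rfl | h
    · rw [hT.last] at hup; omega
    · exact h
  have hP : ∃ t, k < t ∧ L t ≤ L (k-1) := ⟨n, hkn', by rw [hT.last]; omega⟩
  obtain ⟨j, ⟨hj1, hj2⟩, hjmin⟩ :
      ∃ j, (k < j ∧ L j ≤ L (k-1)) ∧ ∀ m, m < j → ¬ (k < m ∧ L m ≤ L (k-1)) :=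
    ⟨Nat.find hP, Nat.find_spec hP, fun m hm => Nat.find_min hP hm⟩
  have hjn : j ≤ n := by
    by_contra hcon
    exact hjmin n (by omega) ⟨hkn', by rw [hT.last]; omega⟩
  have hmid : ∀ m, k ≤ m → m < j → L (k-1) < L m := by
    intro m hm1 hm2
    rcases eq_or_lt_of_le hm1 with rfl | h
    · omega
    · have := hjmin m hm2
      omega
  have hdj : L (j-1) = L j + 1 ∧ L j = L (k-1) := by
    have hstep := hT.step (j-1) (by omega)
    rw [show j - 1 + 1 = j from by omega] at hstep
    have := hmid (j-1) (by omega) (by omega)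
    omega
  refine ⟨j, mem_Gset.mpr ⟨hk, hjn, hj1, hup, hdj.1, hdj.2, ?_⟩⟩
  intro m hm1 hm2
  have := hmid m hm1 hm2
  omega

lemma Gset_down_exists {k : ℕ} (hk : 1 ≤ k) (hkn : k ≤ n) (hdn : L (k-1) = L k + 1) :
    ∃ i, (i, k) ∈ Gset n L := by
  have h0 : L 0 ≤ L k := by rw [hT.zero]; omega
  obtain ⟨t0, ht0, ht0le, hmax⟩ :
      ∃ t0, L t0 ≤ L k ∧ t0 ≤ k - 1 ∧ ∀ m, t0 < m → m ≤ k - 1 → ¬ L m ≤ L k :=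
    ⟨Nat.findGreatest (fun t => L t ≤ L k) (k-1),
      Nat.findGreatest_spec (P := fun t => L t ≤ L k) (Nat.zero_le _) h0,
      Nat.findGreatest_le _,
      fun m hm1 hm2 => Nat.findGreatest_is_greatest (P := fun t => L t ≤ L k) hm1 hm2⟩
  have ht0ne : t0 ≠ k - 1 := by
    intro h; rw [h] at ht0; omega
  have hup : L (t0+1) = L t0 + 1 ∧ L t0 = L k := by
    have hstep := hT.step t0 (by omega)
    have := hmax (t0+1) (by omega) (by omega)
    omega
  refine ⟨t0 + 1, mem_Gset.mpr ⟨by omega, hkn, by omega, ?_, ?_, ?_, ?_⟩⟩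
  · rw [show t0 + 1 - 1 = t0 from by omega]; exact hup.1
  · exact hdn
  · rw [show t0 + 1 - 1 = t0 from by omega]; omega
  · intro m hm1 hm2
    have := hmax m (by omega) (by omega)
    omega

lemma cov_Gset : ∀ t, t ≤ n → cov (Gset n L) t = L t := by
  have hS : IsSecStr n (Gset n L) := Gset_secStr hT
  intro t
  induction t with
  | zero => intro _; rw [cov_zero' hS, hT.zero]
  | succ t ih =>
    intro ht
    have iht := ih (by omega)
    have hs := cov_step hS t
    have hiffu : (∃ j, (t+1, j) ∈ Gset n L) ↔ L (t+1) = L t + 1 := by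
      constructor
      · rintro ⟨j, hj⟩
        rw [mem_Gset] at hj
        have := hj.2.2.2.1
        rwa [show t + 1 - 1 = t from by omega] at this
      · intro h
        exact Gset_up_exists hT (by omega) ht
          (by rw [show t + 1 - 1 = t from by omega]; exact h)
    have hiffd : (∃ i, (i, t+1) ∈ Gset n L) ↔ L t = L (t+1) + 1 := by
      constructor
      · rintro ⟨i, hi⟩
        rw [mem_Gset] at hi
        have := hi.2.2.2.2.1
        rwa [show t + 1 - 1 = t from by omega] at this
      · intro h
        exact Gset_down_exists hT (by omega) ht
          (by rw [show t + 1 - 1 = t from by omega]; exact h)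
    rcases hT.step t (by omega) with h | h | h
    · rw [if_neg (fun hx => by have := hiffd.mp hx; omega),
        if_pos (hiffu.mpr h)] at hs
      omega
    · rw [if_neg (fun hx => by have := hiffd.mp hx; omega),
        if_neg (fun hx => by have := hiffu.mp hx; omega)] at hs
      omega
    · rw [if_pos (hiffd.mpr h),
        if_neg (fun hx => by have := hiffu.mp hx; omega)] at hs
      omega

end TabSide

/-! ### Round trips -/

def F (n : ℕ) (A : Finset (ℕ × ℕ)) : Fin (n+1) → ℕ := fun i => cov A i.val

lemma lf_F {n : ℕ} {A : Finset (ℕ × ℕ)} (hA : IsSecStr n A) (t : ℕ) :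
    lf n (F n A) t = cov A t := by
  unfold lf
  split_ifs with h
  · rfl
  · rw [cov_last' hA (by omega)]

lemma isTableau_F {n : ℕ} {A : Finset (ℕ × ℕ)} (hA : IsSecStr n A) :
    IsTableau n (F n A) := by
  have h := tab_cov hA
  exact ⟨h.zero, h.last, fun i hi => h.step i hi, fun i hi => h.peak i hi⟩

lemma Gset_F {n : ℕ} {A : Finset (ℕ × ℕ)} (hA : IsSecStr n A) :
    Gset n (lf n (F n A)) = A := by
  ext ⟨i, j⟩
  rw [mem_Gset]
  simp only [lf_F hA]
  constructor
  · rintro ⟨hi1, hj2, hij, hup, hdn, heq, hmid⟩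
    exact mem_of_conds hA hi1 hij hup heq hmid
  · intro hp
    have hb : 1 ≤ i ∧ i < j ∧ j ≤ n ∧ j ≠ i + 1 := hA.1 _ hp
    refine ⟨hb.1, hb.2.2.1, hb.2.1, cov_of_up hA hp, cov_of_down hA hp,
      (arc_cov_eq hA hp).1.symm, fun m hm1 hm2 => arc_cov_mid hA hp hm1 hm2⟩

lemma F_Gset {n : ℕ} {l : Fin (n+1) → ℕ} (hl : IsTableau n l) :
    F n (Gset n (lf n l)) = l := by
  have hT := tab_of_isTableau hl
  funext i
  show cov (Gset n (lf n l)) i.val = l i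
  rw [cov_Gset hT i.val (by omega), lf_eq l (by omega : (i : ℕ) ≤ n)]

end SecTab


/-- There is a bijection between RNA secondary structures of length `n`
and 1-tableaux of length `n`. -/
theorem secStr_tableau_bijection (n : ℕ) :
    Nonempty ({A : Finset (ℕ × ℕ) // IsSecStr n A} ≃
      {l : Fin (n + 1) → ℕ // IsTableau n l}) := by
  exact ⟨{
    toFun := fun A => ⟨SecTab.F n A.1, SecTab.isTableau_F A.2⟩
    invFun := fun l => ⟨SecTab.Gset n (SecTab.lf n l.1),
      SecTab.Gset_secStr (SecTab.tab_of_isTableau l.2)⟩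
    left_inv := fun A => Subtype.ext (SecTab.Gset_F A.2)
    right_inv := fun l => Subtype.ext (SecTab.F_Gset l.2) }⟩
end

section
/- The generating function of irreducible RNA secondary structures satisfies Irr(z) = z^2·(S(z) − 1), where S(z) is the generating function of all RNA secondary structures (with S counting the empty structure as 1). -/
open Finset Filter Topology Asymptotics

namespace RNAaux
variable {n : ℕ} {A B : Finset (ℕ × ℕ)}

lemma cov_elt (h : 1 ≤ cov A j) : ∃ p ∈ A, p.1 ≤ j ∧ j < p.2 := by
  obtain ⟨p, hp⟩ := Finset.card_pos.mp h
  obtain ⟨hpA, h1, h2⟩ := Finset.mem_filter.mp hp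
  exact ⟨p, hpA, h1, h2⟩

lemma irr_two : ¬ IsIrr 2 A := by
  rintro ⟨hs, -, hcov⟩
  obtain ⟨p, hpA, hp1, hp2⟩ := cov_elt (hcov 1 le_rfl (by norm_num))
  have := hs.1 p hpA
  omega

lemma irr_iff (hn : 3 ≤ n) : IsIrr n A ↔ IsSecStr n A ∧ (1, n) ∈ A := by
  constructor
  · rintro ⟨hs, -, hcov⟩
    refine ⟨hs, ?_⟩
    obtain ⟨p, hpA, hp1, hp2⟩ := cov_elt (hcov 1 (by omega) (by omega))
    obtain ⟨q, hqA, hq1, hq2⟩ := cov_elt (hcov (n-1) (by omega) (by omega))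
    have hbp := hs.1 p hpA
    have hbq := hs.1 q hqA
    have hp11 : p.1 = 1 := by omega
    have hq2n : q.2 = n := by omega
    by_contra hmem
    have hpn : p.2 ≠ n := by
      intro e
      have : p = (1, n) := by rw [← hp11, ← e]
      rw [this] at hpA; exact hmem hpA
    have hpq : p ≠ q := by intro e; rw [e] at hpn; exact hpn hq2n
    have hm := hs.2.1 p hpA q hqA hpq
    have hcr := hs.2.2 p hpA q hqA
    -- q.1 > p.2
    have hq1gt : p.2 < q.1 := by omega
    -- now cover gap at a = p.2
    obtain ⟨t, htA, ht1, ht2⟩ := cov_elt (hcov p.2 (by omega) (by omega))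
    have hbt := hs.1 t htA
    have htp : t ≠ p := by intro e; rw [e] at ht2; omega
    have hm2 := hs.2.1 t htA p hpA htp
    have hcr2 := hs.2.2 p hpA t htA
    omega
  · rintro ⟨hs, hmem⟩
    refine ⟨hs, by omega, fun j hj1 hj2 => ?_⟩
    refine Finset.card_pos.mpr ⟨(1, n), Finset.mem_filter.mpr ⟨hmem, ?_, ?_⟩⟩
    · exact hj1
    · show j < n; omega

def shDown (A : Finset (ℕ × ℕ)) (n : ℕ) : Finset (ℕ × ℕ) :=
  (A.erase (1, n)).image (fun p => (p.1 - 1, p.2 - 1))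

def shUp (B : Finset (ℕ × ℕ)) (n : ℕ) : Finset (ℕ × ℕ) :=
  insert (1, n) (B.image (fun p => (p.1 + 1, p.2 + 1)))

lemma erase_bounds (hs : IsSecStr n A) (h1n : (1, n) ∈ A) {p : ℕ × ℕ}
    (hp : p ∈ A.erase (1, n)) :
    2 ≤ p.1 ∧ p.1 < p.2 ∧ p.2 ≤ n - 1 ∧ p.2 ≠ p.1 + 1 := by
  obtain ⟨hne, hpA⟩ := Finset.mem_erase.mp hp
  have hb := hs.1 p hpA
  have hm := hs.2.1 p hpA (1, n) h1n hne
  simp only [Prod.fst, Prod.snd] at hm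
  omega

lemma down_sec (hs : IsSecStr n A) (h1n : (1, n) ∈ A) : IsSecStr (n - 2) (shDown A n) := by
  refine ⟨?_, ?_, ?_⟩
  · intro q hq
    obtain ⟨p, hp, rfl⟩ := Finset.mem_image.mp hq
    have := erase_bounds hs h1n hp
    have hb := hs.1 p (Finset.mem_erase.mp hp).2
    simp only
    omega
  · intro q hq q' hq' hne
    obtain ⟨p, hp, rfl⟩ := Finset.mem_image.mp hq
    obtain ⟨p', hp', rfl⟩ := Finset.mem_image.mp hq'
    have hpne : p ≠ p' := by rintro rfl; exact hne rfl
    have hm := hs.2.1 p (Finset.mem_erase.mp hp).2 p' (Finset.mem_erase.mp hp').2 hpne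
    have b1 := erase_bounds hs h1n hp
    have b2 := erase_bounds hs h1n hp'
    simp only
    omega
  · intro q hq q' hq'
    obtain ⟨p, hp, rfl⟩ := Finset.mem_image.mp hq
    obtain ⟨p', hp', rfl⟩ := Finset.mem_image.mp hq'
    have hcr := hs.2.2 p (Finset.mem_erase.mp hp).2 p' (Finset.mem_erase.mp hp').2
    have b1 := erase_bounds hs h1n hp
    have b2 := erase_bounds hs h1n hp'
    simp only
    omega

lemma up_sec (hn : 3 ≤ n) (hs : IsSecStr (n - 2) B) : IsSecStr n (shUp B n) := by
  refine ⟨?_, ?_, ?_⟩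
  · intro q hq
    rcases Finset.mem_insert.mp hq with rfl | hq
    · simp only; omega
    · obtain ⟨p, hp, rfl⟩ := Finset.mem_image.mp hq
      have := hs.1 p hp
      simp only
      omega
  · intro q hq q' hq' hne
    rcases Finset.mem_insert.mp hq with rfl | hq <;>
      rcases Finset.mem_insert.mp hq' with rfl | hq'
    · exact absurd rfl hne
    · obtain ⟨p, hp, rfl⟩ := Finset.mem_image.mp hq'
      have := hs.1 p hp
      simp only
      omega
    · obtain ⟨p, hp, rfl⟩ := Finset.mem_image.mp hq
      have := hs.1 p hp
      simp only
      omega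
    · obtain ⟨p, hp, rfl⟩ := Finset.mem_image.mp hq
      obtain ⟨p', hp', rfl⟩ := Finset.mem_image.mp hq'
      have hpne : p ≠ p' := by rintro rfl; exact hne rfl
      have hm := hs.2.1 p hp p' hp' hpne
      have b1 := hs.1 p hp
      have b2 := hs.1 p' hp'
      simp only
      omega
  · intro q hq q' hq'
    rcases Finset.mem_insert.mp hq with rfl | hq <;>
      rcases Finset.mem_insert.mp hq' with rfl | hq'
    · simp only; omega
    · obtain ⟨p, hp, rfl⟩ := Finset.mem_image.mp hq'
      have := hs.1 p hp
      simp only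
      omega
    · obtain ⟨p, hp, rfl⟩ := Finset.mem_image.mp hq
      have := hs.1 p hp
      simp only
      omega
    · obtain ⟨p, hp, rfl⟩ := Finset.mem_image.mp hq
      obtain ⟨p', hp', rfl⟩ := Finset.mem_image.mp hq'
      have hcr := hs.2.2 p hp p' hp'
      have b1 := hs.1 p hp
      have b2 := hs.1 p' hp'
      simp only
      omega

lemma up_mem : (1, n) ∈ shUp B n := Finset.mem_insert_self _ _

lemma up_down (hs : IsSecStr n A) (h1n : (1, n) ∈ A) : shUp (shDown A n) n = A := by
  rw [shUp, shDown, Finset.image_image]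
  have himg : (A.erase (1, n)).image
      ((fun p : ℕ × ℕ => (p.1 + 1, p.2 + 1)) ∘ (fun p : ℕ × ℕ => (p.1 - 1, p.2 - 1))) =
      A.erase (1, n) := by
    rw [show ((fun p : ℕ × ℕ => (p.1 + 1, p.2 + 1)) ∘ (fun p : ℕ × ℕ => (p.1 - 1, p.2 - 1)))
        = fun p : ℕ × ℕ => (p.1 - 1 + 1, p.2 - 1 + 1) from rfl]
    apply Finset.image_congr (g := id) ?_ |>.trans Finset.image_id
    intro p hp
    have := erase_bounds hs h1n hp
    have hx : p.1 - 1 + 1 = p.1 := by omega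
    have hy : p.2 - 1 + 1 = p.2 := by omega
    simp [hx, hy]
  rw [himg, Finset.insert_erase h1n]

lemma down_up (hs : IsSecStr (n - 2) B) : shDown (shUp B n) n = B := by
  rw [shDown, shUp]
  have hnm : (1, n) ∉ B.image (fun p : ℕ × ℕ => (p.1 + 1, p.2 + 1)) := by
    intro h
    obtain ⟨p, hp, e⟩ := Finset.mem_image.mp h
    have := hs.1 p hp
    have e1 : p.1 + 1 = 1 := by simpa using congrArg Prod.fst e
    omega
  rw [Finset.erase_insert hnm, Finset.image_image]
  rw [show ((fun p : ℕ × ℕ => (p.1 - 1, p.2 - 1)) ∘ (fun p : ℕ × ℕ => (p.1 + 1, p.2 + 1)))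
      = fun p : ℕ × ℕ => (p.1 + 1 - 1, p.2 + 1 - 1) from rfl]
  apply Finset.image_congr (g := id) ?_ |>.trans Finset.image_id
  intro p hp
  simp

noncomputable def irrEquiv (hn : 3 ≤ n) :
    {A : Finset (ℕ × ℕ) // IsIrr n A} ≃ {B : Finset (ℕ × ℕ) // IsSecStr (n - 2) B} where
  toFun x := ⟨shDown x.1 n, down_sec ((irr_iff hn).mp x.2).1 ((irr_iff hn).mp x.2).2⟩
  invFun y := ⟨shUp y.1 n, (irr_iff hn).mpr ⟨up_sec hn y.2, up_mem⟩⟩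
  left_inv x := Subtype.ext (up_down ((irr_iff hn).mp x.2).1 ((irr_iff hn).mp x.2).2)
  right_inv y := Subtype.ext (down_up y.2)

lemma irrCount_eq (hn : 3 ≤ n) : irrCount n = secCount (n - 2) :=
  Nat.card_congr (irrEquiv hn)

lemma irrCount_zero (hn : n ≤ 2) : irrCount n = 0 := by
  have : IsEmpty {A : Finset (ℕ × ℕ) // IsIrr n A} := by
    constructor
    rintro ⟨A, hA⟩
    rcases Nat.lt_or_ge n 2 with h | h
    · have := hA.2.1; omega
    · have : n = 2 := by omega
      subst this
      exact irr_two hA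
  simp [irrCount, Nat.card_of_isEmpty]

lemma secCount_zero : secCount 0 = 1 := by
  have : Unique {A : Finset (ℕ × ℕ) // IsSecStr 0 A} := by
    refine ⟨⟨⟨∅, ?_, ?_, ?_⟩⟩, ?_⟩
    · intro p hp; simp at hp
    · intro p hp; simp at hp
    · intro p hp; simp at hp
    · rintro ⟨A, hA⟩
      apply Subtype.ext
      apply Finset.eq_empty_of_forall_notMem
      intro p hp
      have := hA.1 p hp
      omega
  rw [secCount, Nat.card_unique]



variable {n m : ℕ} {A B : Finset (ℕ × ℕ)}

lemma secEqFst (h : IsSecStr n A) {p q : ℕ × ℕ} (hp : p ∈ A) (hq : q ∈ A)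
    (e : p.1 = q.1) : p = q := by
  by_contra hne
  exact (h.2.1 p hp q hq hne).1 e

lemma secEqSnd (h : IsSecStr n A) {p q : ℕ × ℕ} (hp : p ∈ A) (hq : q ∈ A)
    (e : p.2 = q.2) : p = q := by
  by_contra hne
  exact (h.2.1 p hp q hq hne).2.2.2 e

/-- left endpoints -/
def Lset (A : Finset (ℕ × ℕ)) : Finset ℕ := A.image Prod.fst
/-- right endpoints -/
def Rset (A : Finset (ℕ × ℕ)) : Finset ℕ := A.image Prod.snd

open Classical in
noncomputable def pR (A : Finset (ℕ × ℕ)) (i : ℕ) : ℕ :=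
  if h : ∃ j, (i, j) ∈ A then h.choose else 0

open Classical in
noncomputable def pL (A : Finset (ℕ × ℕ)) (j : ℕ) : ℕ :=
  if h : ∃ i, (i, j) ∈ A then h.choose else 0

lemma pR_mem {i : ℕ} (h : i ∈ Lset A) : (i, pR A i) ∈ A := by
  obtain ⟨p, hp, hpi⟩ := Finset.mem_image.mp h
  have hex : ∃ j, (i, j) ∈ A := ⟨p.2, by rw [← hpi]; simpa using hp⟩
  rw [pR, dif_pos hex]
  exact hex.choose_spec

lemma pL_mem {j : ℕ} (h : j ∈ Rset A) : (pL A j, j) ∈ A := by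
  obtain ⟨p, hp, hpj⟩ := Finset.mem_image.mp h
  have hex : ∃ i, (i, j) ∈ A := ⟨p.1, by rw [← hpj]; simpa using hp⟩
  rw [pL, dif_pos hex]
  exact hex.choose_spec

lemma mem_L {i : ℕ} (h : i ∈ Lset A) : ∃ j, (i, j) ∈ A := ⟨pR A i, pR_mem h⟩
lemma mem_R {j : ℕ} (h : j ∈ Rset A) : ∃ i, (i, j) ∈ A := ⟨pL A j, pL_mem h⟩

lemma L_mem {i j : ℕ} (h : (i, j) ∈ A) : i ∈ Lset A :=
  Finset.mem_image.mpr ⟨(i, j), h, rfl⟩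
lemma R_mem {i j : ℕ} (h : (i, j) ∈ A) : j ∈ Rset A :=
  Finset.mem_image.mpr ⟨(i, j), h, rfl⟩

/-- partner of a left endpoint inside an arc stays inside. -/
lemma filterL_spec {l r x : ℕ} (h : IsSecStr n A) (hlr : (l, r) ∈ A)
    (hx : x ∈ (Finset.Ioo l r).filter (· ∈ Lset A)) :
    pR A x ∈ (Finset.Ioo l r).filter (· ∈ Rset A) ∧ pL A (pR A x) = x := by
  obtain ⟨hx1, hx2⟩ := Finset.mem_filter.mp hx
  obtain ⟨hl, hr⟩ := Finset.mem_Ioo.mp hx1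
  have harc : (x, pR A x) ∈ A := pR_mem hx2
  have hb := h.1 _ harc
  have hner : pR A x ≠ r := by
    intro e
    have := secEqSnd h harc hlr (by simpa using e)
    have : x = l := by simpa using congrArg Prod.fst this
    omega
  have hcross := h.2.2 (l, r) hlr (x, pR A x) harc
  simp only [not_and, not_lt] at hcross
  have hlt : pR A x < r := by
    rcases Nat.lt_or_ge (pR A x) r with h' | h'
    · exact h'
    · exact absurd (hcross hl hr) (by omega)
  have hinv : pL A (pR A x) = x := by
    have harc2 : (pL A (pR A x), pR A x) ∈ A := pL_mem (R_mem harc)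
    have := secEqSnd h harc2 harc rfl
    simpa using congrArg Prod.fst this
  refine ⟨Finset.mem_filter.mpr ⟨Finset.mem_Ioo.mpr ⟨?_, hlt⟩, R_mem harc⟩, hinv⟩
  have : x < pR A x := hb.2.1
  omega

/-- partner of a right endpoint inside an arc stays inside. -/
lemma filterR_spec {l r y : ℕ} (h : IsSecStr n A) (hlr : (l, r) ∈ A)
    (hy : y ∈ (Finset.Ioo l r).filter (· ∈ Rset A)) :
    pL A y ∈ (Finset.Ioo l r).filter (· ∈ Lset A) ∧ pR A (pL A y) = y := by
  obtain ⟨hy1, hy2⟩ := Finset.mem_filter.mp hy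
  obtain ⟨hl, hr⟩ := Finset.mem_Ioo.mp hy1
  have harc : (pL A y, y) ∈ A := pL_mem hy2
  have hb := h.1 _ harc
  have hnel : pL A y ≠ l := by
    intro e
    have := secEqFst h harc hlr (by simpa using e)
    have : y = r := by simpa using congrArg Prod.snd this
    omega
  have hcross := h.2.2 (pL A y, y) harc (l, r) hlr
  simp only [not_and, not_lt] at hcross
  have hgt : l < pL A y := by
    rcases Nat.lt_or_ge l (pL A y) with h' | h'
    · exact h'
    · rcases Nat.lt_or_ge (pL A y) l with h'' | h''
      · exact absurd (hcross h'' hl) (by omega)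
      · omega
  have hinv : pR A (pL A y) = y := by
    have harc2 : (pL A y, pR A (pL A y)) ∈ A := pR_mem (L_mem harc)
    have := secEqFst h harc2 harc rfl
    simpa using congrArg Prod.snd this
  refine ⟨Finset.mem_filter.mpr ⟨Finset.mem_Ioo.mpr ⟨hgt, ?_⟩, L_mem harc⟩, hinv⟩
  have : pL A y < y := hb.2.1
  omega

lemma bal (h : IsSecStr n A) {l r : ℕ} (hlr : (l, r) ∈ A) :
    ((Finset.Ioo l r).filter (· ∈ Lset A)).card = ((Finset.Ioo l r).filter (· ∈ Rset A)).card := by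
  refine Finset.card_bij' (fun x _ => pR A x) (fun y _ => pL A y) ?_ ?_ ?_ ?_
  · exact fun a ha => (filterL_spec h hlr ha).1
  · exact fun a ha => (filterR_spec h hlr ha).1
  · exact fun a ha => (filterL_spec h hlr ha).2
  · exact fun a ha => (filterR_spec h hlr ha).2

lemma unbal (h : IsSecStr n A) {l r r' : ℕ} (hlr : (l, r) ∈ A) (hr' : r' ∈ Rset A)
    (h1 : l < r') (h2 : r' < r) :
    ((Finset.Ioo l r').filter (· ∈ Rset A)).card <
      ((Finset.Ioo l r').filter (· ∈ Lset A)).card := by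
  have hr'mem : r' ∈ (Finset.Ioo l r).filter (· ∈ Rset A) :=
    Finset.mem_filter.mpr ⟨Finset.mem_Ioo.mpr ⟨h1, h2⟩, hr'⟩
  have hl' := filterR_spec h hlr hr'mem
  obtain ⟨hl'1, hl'2⟩ := Finset.mem_filter.mp hl'.1
  have harc' : (pL A r', r') ∈ A := pL_mem hr'
  have hl'arc : pL A r' < r' := (h.1 _ harc').2.1
  have hl'mem : pL A r' ∈ (Finset.Ioo l r').filter (· ∈ Lset A) := by
    refine Finset.mem_filter.mpr ⟨Finset.mem_Ioo.mpr ⟨?_, hl'arc⟩, hl'2⟩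
    exact (Finset.mem_Ioo.mp hl'1).1
  have key : ∀ y ∈ (Finset.Ioo l r').filter (· ∈ Rset A),
      pL A y ∈ ((Finset.Ioo l r').filter (· ∈ Lset A)).erase (pL A r') := by
    intro y hy
    obtain ⟨hy1, hy2⟩ := Finset.mem_filter.mp hy
    obtain ⟨hyl, hyr⟩ := Finset.mem_Ioo.mp hy1
    have hy' : y ∈ (Finset.Ioo l r).filter (· ∈ Rset A) :=
      Finset.mem_filter.mpr ⟨Finset.mem_Ioo.mpr ⟨hyl, by omega⟩, hy2⟩
    have hs := filterR_spec h hlr hy'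
    obtain ⟨hs1, hs2⟩ := Finset.mem_filter.mp hs.1
    have harcy : (pL A y, y) ∈ A := pL_mem hy2
    have hlty : pL A y < y := (h.1 _ harcy).2.1
    refine Finset.mem_erase.mpr ⟨?_, Finset.mem_filter.mpr
      ⟨Finset.mem_Ioo.mpr ⟨(Finset.mem_Ioo.mp hs1).1, by omega⟩, hs2⟩⟩
    intro e
    have := secEqFst h harcy harc' (by simpa using e)
    have : y = r' := by simpa using congrArg Prod.snd this
    omega
  have hinj : Set.InjOn (pL A) ((Finset.Ioo l r').filter (· ∈ Rset A)) := by
    intro y hy y' hy' e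
    have hy2 := (Finset.mem_filter.mp hy).2
    have hy'2 := (Finset.mem_filter.mp hy').2
    have := secEqFst h (pL_mem hy2) (pL_mem hy'2) (by simpa using e)
    simpa using congrArg Prod.snd this
  calc ((Finset.Ioo l r').filter (· ∈ Rset A)).card
      ≤ (((Finset.Ioo l r').filter (· ∈ Lset A)).erase (pL A r')).card :=
        Finset.card_le_card_of_injOn (pL A) key hinj
    _ < ((Finset.Ioo l r').filter (· ∈ Lset A)).card :=
        Finset.card_erase_lt_of_mem hl'mem

lemma snd_eq (hA : IsSecStr n A) (hB : IsSecStr m B) (hL : Lset A = Lset B)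
    (hR : Rset A = Rset B) {l r r' : ℕ} (h1 : (l, r) ∈ A) (h2 : (l, r') ∈ B) : r = r' := by
  rcases lt_trichotomy r r' with hlt | he | hlt
  · exfalso
    have hrB : r ∈ Rset B := hR ▸ R_mem h1
    have hlr : l < r := (hA.1 _ h1).2.1
    have hu := unbal hB h2 hrB hlr hlt
    have hb := bal hA h1
    rw [hL, hR] at hb
    omega
  · exact he
  · exfalso
    have hrA : r' ∈ Rset A := hR.symm ▸ R_mem h2
    have hlr : l < r' := (hB.1 _ h2).2.1
    have hu := unbal hA h1 hrA hlr hlt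
    have hb := bal hB h2
    rw [← hL, ← hR] at hb
    omega

lemma subset_of_LR (hA : IsSecStr n A) (hB : IsSecStr m B) (hL : Lset A = Lset B)
    (hR : Rset A = Rset B) : A ⊆ B := by
  intro p hp
  obtain ⟨l, r⟩ := p
  have hl : l ∈ Lset B := hL ▸ L_mem hp
  have hq : (l, pR B l) ∈ B := pR_mem hl
  have := snd_eq hA hB hL hR hp hq
  rwa [this]

lemma eq_of_LR (hA : IsSecStr n A) (hB : IsSecStr m B) (hL : Lset A = Lset B)
    (hR : Rset A = Rset B) : A = B :=
  Finset.Subset.antisymm (subset_of_LR hA hB hL hR) (subset_of_LR hB hA hL.symm hR.symm)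

/-- the word of a structure, two booleans per vertex -/
def wrd (n : ℕ) (A : Finset (ℕ × ℕ)) : Fin (2 * n) → Bool :=
  fun i => if (i : ℕ) % 2 = 0 then decide ((i : ℕ) / 2 + 1 ∈ Rset A)
    else decide ((i : ℕ) / 2 + 1 ∈ Lset A)

lemma wrd_inj (hA : IsSecStr n A) (hB : IsSecStr n B) (h : wrd n A = wrd n B) : A = B := by
  have hLiff : ∀ i, i ∈ Lset A ↔ i ∈ Lset B := by
    intro i
    by_cases hi : 1 ≤ i ∧ i ≤ n
    · have hidx : 2 * (i - 1) + 1 < 2 * n := by omega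
      have hx : (if (2*(i-1)+1) % 2 = 0 then decide ((2*(i-1)+1) / 2 + 1 ∈ Rset A)
            else decide ((2*(i-1)+1) / 2 + 1 ∈ Lset A)) =
          (if (2*(i-1)+1) % 2 = 0 then decide ((2*(i-1)+1) / 2 + 1 ∈ Rset B)
            else decide ((2*(i-1)+1) / 2 + 1 ∈ Lset B)) := congrFun h ⟨2*(i-1)+1, hidx⟩
      rw [if_neg (by omega), if_neg (by omega)] at hx
      have h3 : (2*(i-1)+1) / 2 + 1 = i := by omega
      rw [h3] at hx
      exact decide_eq_decide.mp hx
    · constructor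
      · intro him; exfalso
        obtain ⟨j, hj⟩ := mem_L him
        have := hA.1 _ hj; simp at this; omega
      · intro him; exfalso
        obtain ⟨j, hj⟩ := mem_L him
        have := hB.1 _ hj; simp at this; omega
  have hRiff : ∀ i, i ∈ Rset A ↔ i ∈ Rset B := by
    intro i
    by_cases hi : 1 ≤ i ∧ i ≤ n
    · have hidx : 2 * (i - 1) < 2 * n := by omega
      have hx : (if (2*(i-1)) % 2 = 0 then decide ((2*(i-1)) / 2 + 1 ∈ Rset A)
            else decide ((2*(i-1)) / 2 + 1 ∈ Lset A)) =
          (if (2*(i-1)) % 2 = 0 then decide ((2*(i-1)) / 2 + 1 ∈ Rset B)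
            else decide ((2*(i-1)) / 2 + 1 ∈ Lset B)) := congrFun h ⟨2*(i-1), hidx⟩
      rw [if_pos (by omega), if_pos (by omega)] at hx
      have h3 : (2*(i-1)) / 2 + 1 = i := by omega
      rw [h3] at hx
      exact decide_eq_decide.mp hx
    · constructor
      · intro him; exfalso
        obtain ⟨j, hj⟩ := mem_R him
        have := hA.1 _ hj; simp at this; omega
      · intro him; exfalso
        obtain ⟨j, hj⟩ := mem_R him
        have := hB.1 _ hj; simp at this; omega
  exact eq_of_LR hA hB (Finset.ext hLiff) (Finset.ext hRiff)

lemma wrd_chain (hA : IsSecStr n A) :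
    (List.ofFn (wrd n A)).Chain' (fun a b => ¬(a = true ∧ b = true)) := by
  show List.IsChain _ (List.ofFn (wrd n A))
  rw [List.isChain_ofFn]
  intro i hi
  rintro ⟨w1, w2⟩
  have w1' : (if i % 2 = 0 then decide (i / 2 + 1 ∈ Rset A)
      else decide (i / 2 + 1 ∈ Lset A)) = true := w1
  have w2' : (if (i+1) % 2 = 0 then decide ((i+1) / 2 + 1 ∈ Rset A)
      else decide ((i+1) / 2 + 1 ∈ Lset A)) = true := w2
  rcases Nat.even_or_odd i with he | ho
  · have h2 : i % 2 = 0 := Nat.even_iff.mp he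
    rw [if_pos h2] at w1'
    rw [if_neg (by omega)] at w2'
    have e3 : (i+1)/2 + 1 = i/2 + 1 := by omega
    rw [e3] at w2'
    obtain ⟨x, hx⟩ := mem_R (of_decide_eq_true w1')
    obtain ⟨y, hy⟩ := mem_L (of_decide_eq_true w2')
    have hne : (x, i/2 + 1) ≠ (i/2 + 1, y) := by
      intro e
      have e1 : x = i/2+1 := by simpa using congrArg Prod.fst e
      have := (hA.1 _ hx).2.1
      simp at this; omega
    exact (hA.2.1 _ hx _ hy hne).2.2.1 rfl
  · have h2 : i % 2 = 1 := Nat.odd_iff.mp ho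
    rw [if_neg (by omega)] at w1'
    rw [if_pos (by omega)] at w2'
    have e3 : (i+1)/2 + 1 = i/2 + 2 := by omega
    rw [e3] at w2'
    obtain ⟨y, hy⟩ := mem_L (of_decide_eq_true w1')
    obtain ⟨x, hx⟩ := mem_R (of_decide_eq_true w2')
    set k := i / 2 with hk
    rcases eq_or_ne (k+1, y) (x, k+2) with e | hne
    · have h1arc := (hA.1 _ hy).2.2.2
      have e2 : y = k + 2 := by simpa using congrArg Prod.snd e
      simp at h1arc; omega
    · have hm := hA.2.1 _ hy _ hx hne
      have hy2 := (hA.1 _ hy).2.1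
      have hx2 := (hA.1 _ hx).2.1
      have hcr := hA.2.2 _ hx _ hy
      simp only [Prod.fst, Prod.snd] at hm hy2 hx2 hcr
      omega

/-- lists with no two adjacent `true`s -/
abbrev TT (m : ℕ) := {l : List Bool // l.length = m ∧ l.Chain' (fun a b => ¬(a = true ∧ b = true))}

instance TTfin (m : ℕ) : Finite (TT m) := by
  have h : {l : List Bool | l.length = m ∧ l.Chain' (fun a b => ¬(a = true ∧ b = true))}.Finite :=
    Set.Finite.subset (List.finite_length_eq Bool m) (fun l hl => hl.1)
  exact h.to_subtype

def stepT (m : ℕ) : TT (m + 2) → TT (m + 1) ⊕ TT m := fun x =>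
  match x with
  | ⟨[], h, _⟩ => absurd h (by simp)
  | ⟨false :: t, h, hc⟩ => Sum.inl ⟨t, by simpa using h, hc.tail⟩
  | ⟨true :: [], h, _⟩ => absurd h (by simp)
  | ⟨true :: true :: _, _, hc⟩ => absurd (List.isChain_cons_cons.mp hc).1 (by simp)
  | ⟨true :: false :: t, h, hc⟩ =>
      Sum.inr ⟨t, by simpa using h, ((List.isChain_cons_cons.mp hc).2).tail⟩

lemma stepT_inj (m : ℕ) : Function.Injective (stepT m) := by
  rintro ⟨l1, h1, c1⟩ ⟨l2, h2, c2⟩ h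
  match l1, l2, h1, h2, c1, c2, h with
  | [], _, h1, h2, c1, c2, h => simp at h1
  | _, [], h1, h2, c1, c2, h => simp at h2
  | true :: [], _, h1, h2, c1, c2, h => simp at h1
  | _, true :: [], h1, h2, c1, c2, h => simp at h2
  | true :: true :: t1, _, h1, h2, c1, c2, h =>
      simp [List.Chain', List.isChain_cons_cons] at c1
  | _, true :: true :: t2, h1, h2, c1, c2, h =>
      simp [List.Chain', List.isChain_cons_cons] at c2
  | false :: t1, false :: t2, h1, h2, c1, c2, h =>
      simp only [stepT, Sum.inl.injEq, Subtype.mk.injEq] at h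
      simp [h]
  | false :: t1, true :: false :: t2, h1, h2, c1, c2, h =>
      exact absurd h (by simp [stepT])
  | true :: false :: t1, false :: t2, h1, h2, c1, c2, h =>
      exact absurd h (by simp [stepT])
  | true :: false :: t1, true :: false :: t2, h1, h2, c1, c2, h =>
      simp only [stepT, Sum.inr.injEq, Subtype.mk.injEq] at h
      simp [h]

lemma TTcard_rec (m : ℕ) :
    Nat.card (TT (m + 2)) ≤ Nat.card (TT (m + 1)) + Nat.card (TT m) := by
  have := Nat.card_le_card_of_injective (stepT m) (stepT_inj m)
  rwa [Nat.card_sum] at this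

instance : Unique (TT 0) :=
  ⟨⟨⟨[], rfl, by exact List.isChain_nil⟩⟩, by
    rintro ⟨l, h, c⟩
    apply Subtype.ext
    simpa using List.length_eq_zero_iff.mp h⟩

lemma TT1_le : Nat.card (TT 1) ≤ 2 := by
  have hinj : Function.Injective (fun x : TT 1 => x.1.headI) := by
    rintro ⟨l1, h1, c1⟩ ⟨l2, h2, c2⟩ h
    obtain ⟨a, rfl⟩ := List.length_eq_one_iff.mp h1
    obtain ⟨b, rfl⟩ := List.length_eq_one_iff.mp h2
    simp only [List.headI] at h
    apply Subtype.ext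
    simp [h]
  have := Nat.card_le_card_of_injective _ hinj
  simpa using this

noncomputable def gold : ℝ := (1 + Real.sqrt 5) / 2

lemma gold_ge_one : 1 ≤ gold := by
  have : (1:ℝ) ≤ Real.sqrt 5 := by
    rw [show (1:ℝ) = Real.sqrt 1 by simp]
    exact Real.sqrt_le_sqrt (by norm_num)
  rw [gold]; linarith

lemma gold_sq : gold ^ 2 = gold + 1 := by
  have h5 : Real.sqrt 5 ^ 2 = 5 := Real.sq_sqrt (by norm_num)
  rw [gold]; nlinarith [h5]

lemma TTcard_le : ∀ m : ℕ, (Nat.card (TT m) : ℝ) ≤ 2 * gold ^ m := by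
  intro m
  induction m using Nat.strong_induction_on with
  | _ m ih =>
    match m with
    | 0 => simp [Nat.card_unique]
    | 1 =>
      have h2 := TT1_le
      have h2' : (Nat.card (TT 1) : ℝ) ≤ 2 := by exact_mod_cast h2
      calc (Nat.card (TT 1) : ℝ) ≤ 2 := h2'
        _ ≤ 2 * gold ^ 1 := by nlinarith [gold_ge_one]
    | (m + 2) =>
      have h1 := ih (m + 1) (by omega)
      have h2 := ih m (by omega)
      have h3 := TTcard_rec m
      have h4 : (Nat.card (TT (m+2)) : ℝ) ≤ (Nat.card (TT (m+1)) : ℝ) + (Nat.card (TT m) : ℝ) := by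
        exact_mod_cast h3
      have hg : (0:ℝ) ≤ gold := by linarith [gold_ge_one]
      have hpow : (0:ℝ) ≤ gold ^ m := pow_nonneg hg m
      calc (Nat.card (TT (m+2)) : ℝ) ≤ 2 * gold ^ (m+1) + 2 * gold ^ m := by linarith
        _ = 2 * gold ^ m * (gold + 1) := by ring
        _ = 2 * gold ^ m * gold ^ 2 := by rw [gold_sq]
        _ = 2 * gold ^ (m + 2) := by ring

lemma secCount_le (n : ℕ) : (secCount n : ℝ) ≤ 2 * gold ^ (2 * n) := by
  have hinj : Function.Injective
      (fun x : {A : Finset (ℕ × ℕ) // IsSecStr n A} =>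
        (⟨List.ofFn (wrd n x.1), by simp, wrd_chain x.2⟩ : TT (2 * n))) := by
    rintro ⟨A, hA⟩ ⟨B, hB⟩ h
    apply Subtype.ext
    apply wrd_inj hA hB
    have := congrArg Subtype.val h
    exact List.ofFn_injective this
  have h1 : secCount n ≤ Nat.card (TT (2 * n)) :=
    Nat.card_le_card_of_injective _ hinj
  calc (secCount n : ℝ) ≤ (Nat.card (TT (2 * n)) : ℝ) := by exact_mod_cast h1
    _ ≤ 2 * gold ^ (2 * n) := TTcard_le (2 * n)

end RNAaux

/-- `Irr(z) = z²·(S(z) − 1)`. -/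
theorem irr_gf_eq (z : ℝ) (hz0 : 0 < z) (hz1 : z < rho) :
    ∑' n : ℕ, (irrCount n : ℝ) * z ^ n =
      z ^ 2 * ((∑' n : ℕ, (secCount n : ℝ) * z ^ n) - 1) := by
  have hg1 := RNAaux.gold_ge_one
  have hg0 : (0:ℝ) ≤ RNAaux.gold := by linarith
  have hrho : RNAaux.gold ^ 2 * rho = 1 := by
    have h5 : Real.sqrt 5 ^ 2 = 5 := Real.sq_sqrt (by norm_num)
    rw [RNAaux.gold, rho]; nlinarith [h5]
  set r : ℝ := RNAaux.gold ^ 2 * z with hr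
  have hr0 : (0:ℝ) ≤ r := by positivity
  have hr1 : r < 1 := by
    have hgp : (0:ℝ) < RNAaux.gold ^ 2 := by positivity
    calc r = RNAaux.gold ^ 2 * z := hr
      _ < RNAaux.gold ^ 2 * rho := mul_lt_mul_of_pos_left hz1 hgp
      _ = 1 := hrho
  have hgeo : Summable (fun k : ℕ => 2 * r ^ k) :=
    (summable_geometric_of_lt_one hr0 hr1).mul_left 2
  have hFle : ∀ k : ℕ, (secCount k : ℝ) * z ^ k ≤ 2 * r ^ k := by
    intro k
    have hle := RNAaux.secCount_le k
    have hzk : (0:ℝ) ≤ z ^ k := by positivity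
    calc (secCount k : ℝ) * z ^ k ≤ 2 * RNAaux.gold ^ (2 * k) * z ^ k :=
        mul_le_mul_of_nonneg_right hle hzk
      _ = 2 * r ^ k := by rw [hr, mul_pow, pow_mul]; ring
  have hF : Summable (fun k : ℕ => (secCount k : ℝ) * z ^ k) :=
    Summable.of_nonneg_of_le (fun k => by positivity) hFle hgeo
  have hGle : ∀ k : ℕ, (irrCount k : ℝ) * z ^ k ≤ 2 * r ^ k := by
    intro k
    rcases Nat.lt_or_ge k 3 with hk | hk
    · have h0 : irrCount k = 0 := RNAaux.irrCount_zero (by omega)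
      rw [h0]
      simp only [Nat.cast_zero, zero_mul]
      positivity
    · have he : irrCount k = secCount (k - 2) := RNAaux.irrCount_eq hk
      rw [he]
      have h1 := RNAaux.secCount_le (k - 2)
      have hmon : RNAaux.gold ^ (2 * (k - 2)) ≤ RNAaux.gold ^ (2 * k) :=
        pow_le_pow_right₀ hg1 (by omega)
      have hzk : (0:ℝ) ≤ z ^ k := by positivity
      calc (secCount (k - 2) : ℝ) * z ^ k ≤ 2 * RNAaux.gold ^ (2 * k) * z ^ k :=
          mul_le_mul_of_nonneg_right (le_trans h1 (by linarith)) hzk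
        _ = 2 * r ^ k := by rw [hr, mul_pow, pow_mul]; ring
  have hG : Summable (fun k : ℕ => (irrCount k : ℝ) * z ^ k) :=
    Summable.of_nonneg_of_le (fun k => by positivity) hGle hgeo
  set F := fun k : ℕ => (secCount k : ℝ) * z ^ k with hFdef
  set G := fun k : ℕ => (irrCount k : ℝ) * z ^ k with hGdef
  have hG0 : G 0 = 0 := by simp [hGdef, RNAaux.irrCount_zero (by norm_num : (0:ℕ) ≤ 2)]
  have hG1 : G 1 = 0 := by simp [hGdef, RNAaux.irrCount_zero (by norm_num : (1:ℕ) ≤ 2)]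
  have hG2 : G 2 = 0 := by simp [hGdef, RNAaux.irrCount_zero (by norm_num : (2:ℕ) ≤ 2)]
  have h1 : ∑' k, G k = G 0 + ∑' k, G (k + 1) := Summable.tsum_eq_zero_add hG
  have h2 : ∑' k, G (k + 1) = G 1 + ∑' k, G (k + 2) :=
    Summable.tsum_eq_zero_add ((summable_nat_add_iff 1).mpr hG)
  have h3 : ∑' k, G (k + 2) = G 2 + ∑' k, G (k + 3) :=
    Summable.tsum_eq_zero_add ((summable_nat_add_iff 2).mpr hG)
  have hshift : ∀ k : ℕ, G (k + 3) = z ^ 2 * F (k + 1) := by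
    intro k
    have he : irrCount (k + 3) = secCount (k + 1) := by
      have h' := RNAaux.irrCount_eq (n := k + 3) (by omega)
      simpa using h'
    simp only [hGdef, hFdef, he]
    rw [show k + 3 = 2 + (k + 1) by omega, pow_add]
    ring
  have hRHS : ∑' k, F k = F 0 + ∑' k, F (k + 1) := Summable.tsum_eq_zero_add hF
  have hF0 : F 0 = 1 := by simp [hFdef, RNAaux.secCount_zero]
  calc ∑' k, G k = ∑' k, G (k + 3) := by rw [h1, h2, h3, hG0, hG1, hG2]; ring
    _ = ∑' k, (z ^ 2 * F (k + 1)) := tsum_congr hshift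
    _ = z ^ 2 * ∑' k, F (k + 1) := tsum_mul_left
    _ = z ^ 2 * ((∑' k, F k) - 1) := by rw [hRHS, hF0]; ring
end

section
/- The numbers s(n) of RNA secondary structures satisfy the recursion s(n+1) = s(n) + Σ_{k=0}^{n-2} s(k)·s(n−1−k) for n ≥ 1, with s(0) = s(1) = s(2) = 1. -/
open Finset Filter Topology Asymptotics

instance isSecStr_dec (n : ℕ) (A : Finset (ℕ × ℕ)) : Decidable (IsSecStr n A) := by
  unfold IsSecStr; infer_instance

def secFinset (n : ℕ) : Finset (Finset (ℕ × ℕ)) :=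
  ((Finset.Icc 1 n ×ˢ Finset.Icc 1 n).powerset).filter (IsSecStr n)

lemma mem_secFinset {n : ℕ} {A : Finset (ℕ × ℕ)} : A ∈ secFinset n ↔ IsSecStr n A := by
  simp only [secFinset, Finset.mem_filter, Finset.mem_powerset, and_iff_right_iff_imp]
  intro h p hp
  have := h.1 p hp
  simp only [Finset.mem_product, Finset.mem_Icc]
  omega

lemma secCount_eq (n : ℕ) : secCount n = (secFinset n).card := by
  rw [secCount, Nat.card_congr (Equiv.subtypeEquivRight (fun A => mem_secFinset.symm))]
  exact Nat.card_eq_finsetCard _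

/-- Structures of length n+1 containing the arc (k+1, n+1). -/
def arcSet (n k : ℕ) : Finset (Finset (ℕ × ℕ)) :=
  (secFinset (n+1)).filter (fun A => (k+1, n+1) ∈ A)

def lowPart (k : ℕ) (A : Finset (ℕ × ℕ)) : Finset (ℕ × ℕ) :=
  A.filter (fun p => p.2 ≤ k)

def highPart (n k : ℕ) (A : Finset (ℕ × ℕ)) : Finset (ℕ × ℕ) :=
  (A.filter (fun p => k+2 ≤ p.1 ∧ k+2 ≤ p.2 ∧ p.2 ≤ n)).image
    (fun p => (p.1 - (k+1), p.2 - (k+1)))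

def glue (n k : ℕ) (B C : Finset (ℕ × ℕ)) : Finset (ℕ × ℕ) :=
  insert (k+1, n+1) (B ∪ C.image (fun p => (p.1 + (k+1), p.2 + (k+1))))

lemma mem_highPart {n k : ℕ} {A : Finset (ℕ × ℕ)} {q : ℕ × ℕ} :
    q ∈ highPart n k A ↔
      (q.1 + (k+1), q.2 + (k+1)) ∈ A ∧ 1 ≤ q.1 ∧ 1 ≤ q.2 ∧ q.2 + (k+1) ≤ n := by
  simp only [highPart, Finset.mem_image, Finset.mem_filter]
  constructor
  · rintro ⟨p, ⟨hp, h1, h2, h3⟩, rfl⟩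
    have he : p.1 - (k+1) + (k+1) = p.1 ∧ p.2 - (k+1) + (k+1) = p.2 := by omega
    exact ⟨by rw [he.1, he.2]; exact hp, by omega, by omega, by omega⟩
  · rintro ⟨hp, h1, h2, h3⟩
    exact ⟨(q.1 + (k+1), q.2 + (k+1)), ⟨hp, by omega, by omega, by omega⟩, by simp⟩

lemma mem_up {k : ℕ} {C : Finset (ℕ × ℕ)} (hC : ∀ p ∈ C, 1 ≤ p.1 ∧ p.1 < p.2) {q : ℕ × ℕ} :
    q ∈ C.image (fun p => (p.1 + (k+1), p.2 + (k+1))) ↔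
      (q.1 - (k+1), q.2 - (k+1)) ∈ C ∧ k+2 ≤ q.1 ∧ q.1 < q.2 := by
  simp only [Finset.mem_image]
  constructor
  · rintro ⟨p, hp, rfl⟩
    have := hC p hp
    exact ⟨by simp only [Nat.add_sub_cancel]; exact hp, by omega, by omega⟩
  · rintro ⟨hp, h1, h2⟩
    refine ⟨(q.1 - (k+1), q.2 - (k+1)), hp, ?_⟩
    have := hC _ hp
    simp only [Prod.ext_iff]
    omega

/-- In a structure of length n+1 containing the arc (k+1,n+1), every other arc lies
entirely below k+1 or entirely between k+2 and n. -/
lemma split_lemma {n k : ℕ} {A : Finset (ℕ × ℕ)} (hA : IsSecStr (n+1) A)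
    (hm : (k+1, n+1) ∈ A) {p : ℕ × ℕ} (hp : p ∈ A) (hne : p ≠ (k+1, n+1)) :
    p.2 ≤ k ∨ (k+2 ≤ p.1 ∧ p.2 ≤ n) := by
  obtain ⟨h1, h2, h3⟩ := hA
  have b1 := h1 p hp
  have b2 := h2 p hp _ hm hne
  have b3 := h3 p hp _ hm
  omega

lemma arcSet_card {n k : ℕ} (hk : k + 1 < n) :
    (arcSet n k).card = (secFinset k).card * (secFinset (n-1-k)).card := by
  rw [← Finset.card_product]
  apply Finset.card_bij' (fun A _ => (lowPart k A, highPart n k A))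
    (fun P _ => glue n k P.1 P.2)
  · -- maps into product
    rintro A hA
    rw [arcSet, Finset.mem_filter, mem_secFinset] at hA
    obtain ⟨hS, hm⟩ := hA
    obtain ⟨h1, h2, h3⟩ := hS
    rw [Finset.mem_product]
    dsimp only
    rw [mem_secFinset, mem_secFinset]
    constructor
    · refine ⟨?_, ?_, ?_⟩
      · intro p hp
        rw [lowPart, Finset.mem_filter] at hp
        have := h1 p hp.1
        omega
      · intro p hp q hq hne
        rw [lowPart, Finset.mem_filter] at hp hq
        exact h2 p hp.1 q hq.1 hne
      · intro p hp q hq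
        rw [lowPart, Finset.mem_filter] at hp hq
        exact h3 p hp.1 q hq.1
    · refine ⟨?_, ?_, ?_⟩
      · intro p hp
        rw [mem_highPart] at hp
        have := h1 _ hp.1
        omega
      · intro p hp q hq hne
        rw [mem_highPart] at hp hq
        have hne' : ((p.1 + (k+1), p.2 + (k+1)) : ℕ × ℕ) ≠ (q.1 + (k+1), q.2 + (k+1)) := by
          simp only [ne_eq, Prod.mk.injEq, Prod.ext_iff] at hne ⊢
          omega
        have := h2 _ hp.1 _ hq.1 hne'
        omega
      · intro p hp q hq
        rw [mem_highPart] at hp hq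
        have := h3 _ hp.1 _ hq.1
        omega
  · -- glue maps into arcSet
    rintro ⟨B, C⟩ hP
    rw [Finset.mem_product, mem_secFinset, mem_secFinset] at hP
    obtain ⟨⟨hB1, hB2, hB3⟩, hC1, hC2, hC3⟩ := hP
    have hC' : ∀ p ∈ C, 1 ≤ p.1 ∧ p.1 < p.2 := fun p hp => ⟨(hC1 p hp).1, (hC1 p hp).2.1⟩
    have memg : ∀ q : ℕ × ℕ, q ∈ glue n k B C ↔
        q = (k+1, n+1) ∨ q ∈ B ∨ ((q.1 - (k+1), q.2 - (k+1)) ∈ C ∧ k+2 ≤ q.1 ∧ q.1 < q.2) := by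
      intro q
      rw [glue, Finset.mem_insert, Finset.mem_union, mem_up hC']
    rw [arcSet, Finset.mem_filter, mem_secFinset]
    have harc : (k+1, n+1) ∈ glue n k B C := Finset.mem_insert_self _ _
    refine ⟨⟨?_, ?_, ?_⟩, harc⟩
    · intro p hp
      rw [memg] at hp
      rcases hp with rfl | hp | ⟨hp, h1, h2⟩
      · omega
      · have := hB1 p hp; omega
      · have := hC1 _ hp; omega
    · intro p hp q hq hne
      rw [memg] at hp hq
      rcases hp with rfl | hp | ⟨hp, hp1, hp2⟩ <;> rcases hq with rfl | hq | ⟨hq, hq1, hq2⟩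
      · exact absurd rfl hne
      · have := hB1 q hq; omega
      · have := hC1 _ hq; omega
      · have := hB1 p hp; omega
      · exact hB2 p hp q hq hne
      · have h1 := hB1 p hp; have h2 := hC1 _ hq; omega
      · have := hC1 _ hp; omega
      · have h1 := hB1 q hq; have h2 := hC1 _ hp; omega
      · have hne' : ((p.1 - (k+1), p.2 - (k+1)) : ℕ × ℕ) ≠ (q.1 - (k+1), q.2 - (k+1)) := by
          simp only [ne_eq, Prod.mk.injEq, Prod.ext_iff] at hne ⊢
          omega
        have := hC2 _ hp _ hq hne'
        omega
    · intro p hp q hq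
      rw [memg] at hp hq
      rcases hp with rfl | hp | ⟨hp, hp1, hp2⟩ <;> rcases hq with rfl | hq | ⟨hq, hq1, hq2⟩
      · omega
      · have := hB1 q hq; omega
      · have := hC1 _ hq; omega
      · have := hB1 p hp; omega
      · exact hB3 p hp q hq
      · have h1 := hB1 p hp; have h2 := hC1 _ hq; omega
      · have h1 := hC1 _ hp; omega
      · have h1 := hB1 q hq; have h2 := hC1 _ hp; omega
      · have := hC3 _ hp _ hq
        omega
  · -- left inverse : glue (lowPart, highPart) = A
    intro A hA
    rw [arcSet, Finset.mem_filter, mem_secFinset] at hA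
    obtain ⟨hS, hm⟩ := hA
    have hC' : ∀ p ∈ highPart n k A, 1 ≤ p.1 ∧ p.1 < p.2 := by
      intro p hp
      rw [mem_highPart] at hp
      have := hS.1 _ hp.1
      omega
    ext q
    rw [glue, Finset.mem_insert, Finset.mem_union, mem_up hC', mem_highPart]
    simp only [lowPart, Finset.mem_filter]
    constructor
    · rintro (rfl | ⟨hq, _⟩ | ⟨⟨hq, h1, h2, h3⟩, h4, h5⟩)
      · exact hm
      · exact hq
      · have he : ((q.1 - (k+1) + (k+1), q.2 - (k+1) + (k+1)) : ℕ × ℕ) = q := by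
          simp only [Prod.ext_iff]; omega
        rwa [he] at hq
    · intro hq
      by_cases hne : q = (k+1, n+1)
      · exact Or.inl hne
      · rcases split_lemma hS hm hq hne with h | h
        · exact Or.inr (Or.inl ⟨hq, h⟩)
        · right; right
          have hb := hS.1 q hq
          refine ⟨⟨?_, by omega, by omega, by omega⟩, by omega, by omega⟩
          have he : ((q.1 - (k+1) + (k+1), q.2 - (k+1) + (k+1)) : ℕ × ℕ) = q := by
            simp only [Prod.ext_iff]; omega
          rw [he]; exact hq
  · -- right inverse : (lowPart (glue B C), highPart (glue B C)) = (B, C)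
    rintro ⟨B, C⟩ hP
    rw [Finset.mem_product, mem_secFinset, mem_secFinset] at hP
    obtain ⟨⟨hB1, hB2, hB3⟩, hC1, hC2, hC3⟩ := hP
    have hC' : ∀ p ∈ C, 1 ≤ p.1 ∧ p.1 < p.2 := fun p hp => ⟨(hC1 p hp).1, (hC1 p hp).2.1⟩
    have memg : ∀ q : ℕ × ℕ, q ∈ glue n k B C ↔
        q = (k+1, n+1) ∨ q ∈ B ∨ ((q.1 - (k+1), q.2 - (k+1)) ∈ C ∧ k+2 ≤ q.1 ∧ q.1 < q.2) := by
      intro q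
      rw [glue, Finset.mem_insert, Finset.mem_union, mem_up hC']
    simp only [Prod.ext_iff]
    constructor
    · ext q
      simp only [lowPart, Finset.mem_filter, memg]
      constructor
      · rintro ⟨rfl | hq | ⟨hq, h1, h2⟩, hle⟩
        · omega
        · exact hq
        · omega
      · intro hq
        have := hB1 q hq
        exact ⟨Or.inr (Or.inl hq), by omega⟩
    · ext q
      rw [mem_highPart, memg]
      constructor
      · rintro ⟨h | hq | ⟨hq, h1, h2⟩, h3, h4, h5⟩
        · simp only [Prod.ext_iff] at h; omega
        · have := hB1 _ hq; omega
        · simpa only [Nat.add_sub_cancel] using hq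
      · intro hq
        have := hC1 q hq
        refine ⟨Or.inr (Or.inr ⟨by simpa only [Nat.add_sub_cancel] using hq, by omega, by omega⟩),
          by omega, by omega, by omega⟩

lemma noArc_filter (n : ℕ) :
    (secFinset (n+1)).filter (fun A => ∀ p ∈ A, p.2 ≠ n+1) = secFinset n := by
  ext A
  simp only [Finset.mem_filter, mem_secFinset]
  constructor
  · rintro ⟨⟨h1, h2, h3⟩, hno⟩
    refine ⟨fun p hp => ?_, h2, h3⟩
    have := h1 p hp
    have := hno p hp
    omega
  · rintro ⟨h1, h2, h3⟩
    refine ⟨⟨fun p hp => ?_, h2, h3⟩, fun p hp => ?_⟩ <;>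
      · have := h1 p hp; omega

lemma hasArc_filter (n : ℕ) :
    (secFinset (n+1)).filter (fun A => ¬ ∀ p ∈ A, p.2 ≠ n+1) =
      (Finset.range (n-1)).biUnion (arcSet n) := by
  ext A
  simp only [Finset.mem_filter, Finset.mem_biUnion, Finset.mem_range, arcSet, not_forall]
  constructor
  · rintro ⟨hA, p, hp, hne⟩
    have hp2 : p.2 = n + 1 := by simpa using hne
    have h1 := (mem_secFinset.mp hA).1 p hp
    refine ⟨p.1 - 1, by omega, hA, ?_⟩
    have : ((p.1 - 1 + 1, n + 1) : ℕ × ℕ) = p := by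
      simp only [Prod.ext_iff]; omega
    rwa [this]
  · rintro ⟨k, hk, hA, hm⟩
    exact ⟨hA, (k+1, n+1), hm, by simp⟩

lemma arcSet_disjoint {n : ℕ} {k k' : ℕ} (h : k ≠ k') :
    Disjoint (arcSet n k) (arcSet n k') := by
  rw [Finset.disjoint_left]
  intro A hA hA'
  rw [arcSet, Finset.mem_filter] at hA hA'
  have hS := mem_secFinset.mp hA.1
  have hne : ((k+1, n+1) : ℕ × ℕ) ≠ (k'+1, n+1) := by
    simp only [ne_eq, Prod.mk.injEq]; omega
  have := hS.2.1 _ hA.2 _ hA'.2 hne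
  omega


/-- Waterman's recursion
`s(n+1) = s(n) + Σ_{k=0}^{n−2} s(k)s(n−1−k)` for `n ≥ 1`, with `s(0)=s(1)=s(2)=1`. -/
theorem secCount_recursion :
    secCount 0 = 1 ∧ secCount 1 = 1 ∧ secCount 2 = 1 ∧
    ∀ n : ℕ, 1 ≤ n →
      secCount (n + 1) =
        secCount n + ∑ k ∈ Finset.range (n - 1), secCount k * secCount (n - 1 - k) := by
  refine ⟨by rw [secCount_eq]; decide, by rw [secCount_eq]; decide,
    by rw [secCount_eq]; decide, fun n hn => ?_⟩
  rw [secCount_eq]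
  rw [← Finset.card_filter_add_card_filter_not
    (p := fun A => ∀ p ∈ A, p.2 ≠ n+1) (s := secFinset (n+1))]
  rw [noArc_filter, hasArc_filter, ← secCount_eq,
    Finset.card_biUnion (fun k _ k' _ h => arcSet_disjoint h)]
  congr 1
  apply Finset.sum_congr rfl
  intro k hk
  rw [Finset.mem_range] at hk
  rw [arcSet_card (by omega), secCount_eq, secCount_eq]
end

section
/- The singular expansion of S(z) at ρ = (3 − √5)/2 is S(z) = 2/(3 − √5) − √(8(3√5 − 5)(ρ − z))/(3 − √5)^2 + O(ρ − z) as z → ρ. -/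
open Finset Filter Topology Asymptotics

noncomputable def Afun (z : ℝ) : ℝ := (1 - z + z ^ 2) / (2 * z ^ 2)

noncomputable def Bfun (z : ℝ) : ℝ :=
  Real.sqrt ((z ^ 2 + z + 1) * ((3 + Real.sqrt 5) / 2 - z)) / (2 * z ^ 2)

/-- The singular expansion of `S(z)` at `ρ = (3−√5)/2`:
`S(z) = 2/(3−√5) − √(8(3√5−5)(ρ−z))/(3−√5)² + O(ρ−z)` as `z → ρ⁻`. -/
theorem S_singular_expansion :
    (fun z : ℝ => Sfun z -
        (2 / (3 - Real.sqrt 5) -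
          Real.sqrt (8 * (3 * Real.sqrt 5 - 5) * (rho - z)) / (3 - Real.sqrt 5) ^ 2))
      =O[nhdsWithin rho (Set.Iio rho)] (fun z : ℝ => rho - z) := by
  have hs : Real.sqrt 5 ^ 2 = 5 := Real.sq_sqrt (by norm_num)
  have hs0 : (0:ℝ) ≤ Real.sqrt 5 := Real.sqrt_nonneg 5
  have hs2 : (2:ℝ) < Real.sqrt 5 := by nlinarith
  have hs3 : Real.sqrt 5 < 3 := by nlinarith
  have hρ : rho = (3 - Real.sqrt 5) / 2 := rfl
  have hρ0 : (0:ℝ) < rho := by rw [hρ]; linarith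
  have hρ1 : rho < 1 := by rw [hρ]; linarith
  -- value facts
  have hAρ : Afun rho = 2 / (3 - Real.sqrt 5) := by
    unfold Afun
    rw [hρ]
    rw [div_eq_div_iff (by nlinarith) (by nlinarith)]
    linear_combination (3/4 - Real.sqrt 5 / 4) * hs
  have hBρarg : (rho ^ 2 + rho + 1) * ((3 + Real.sqrt 5) / 2 - rho)
      = 2 * (3 * Real.sqrt 5 - 5) := by
    rw [hρ]; linear_combination (Real.sqrt 5 / 4 - 2) * hs
  have hBρ : Bfun rho = Real.sqrt (2 * (3 * Real.sqrt 5 - 5)) / (2 * rho ^ 2) := by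
    unfold Bfun; rw [hBρarg]
  -- differentiability
  have hznz : (fun z : ℝ => 2 * z ^ 2) rho ≠ 0 := by simp; positivity
  have hAdiff : DifferentiableAt ℝ Afun rho := by
    apply DifferentiableAt.div (by fun_prop) (by fun_prop)
    simpa using hznz
  have hargpos : (0:ℝ) < (rho ^ 2 + rho + 1) * ((3 + Real.sqrt 5) / 2 - rho) := by
    rw [hBρarg]; nlinarith
  have hBdiff : DifferentiableAt ℝ Bfun rho := by
    apply DifferentiableAt.div _ (by fun_prop) (by simpa using hznz)
    exact DifferentiableAt.sqrt (by fun_prop) (ne_of_gt hargpos)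
  -- BigO facts
  have hsub : (fun z : ℝ => z - rho) =O[𝓝 rho] (fun z : ℝ => rho - z) := by
    apply IsBigO.of_bound 1
    filter_upwards with z
    simp [abs_sub_comm]
  have hAO : (fun z : ℝ => Afun z - Afun rho) =O[𝓝 rho] (fun z : ℝ => rho - z) :=
    (hAdiff.hasFDerivAt.isBigO_sub).trans hsub
  have hBO : (fun z : ℝ => Bfun z - Bfun rho) =O[𝓝 rho] (fun z : ℝ => rho - z) :=
    (hBdiff.hasFDerivAt.isBigO_sub).trans hsub
  have hsqrtO : (fun z : ℝ => Real.sqrt (rho - z)) =O[𝓝 rho] (fun _ : ℝ => (1:ℝ)) := by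
    apply IsBigO.of_bound 1
    have : ∀ᶠ z : ℝ in 𝓝 rho, rho - 1 < z := eventually_gt_nhds (by linarith)
    filter_upwards [this] with z hz
    rw [Real.norm_eq_abs, abs_of_nonneg (Real.sqrt_nonneg _), norm_one, mul_one]
    calc Real.sqrt (rho - z) ≤ Real.sqrt 1 := Real.sqrt_le_sqrt (by linarith)
    _ = 1 := Real.sqrt_one
  have hBO2 : (fun z : ℝ => (Bfun z - Bfun rho) * Real.sqrt (rho - z))
      =O[𝓝 rho] (fun z : ℝ => rho - z) := by
    have := hBO.mul hsqrtO
    simpa using this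
  have main : (fun z : ℝ => (Afun z - Afun rho) - (Bfun z - Bfun rho) * Real.sqrt (rho - z))
      =O[nhdsWithin rho (Set.Iio rho)] (fun z : ℝ => rho - z) :=
    ((hAO.sub hBO2).mono nhdsWithin_le_nhds)
  apply main.congr' _ EventuallyEq.rfl
  have h1 : ∀ᶠ z : ℝ in nhdsWithin rho (Set.Iio rho), 0 < z :=
    eventually_nhdsWithin_of_eventually_nhds (eventually_gt_nhds hρ0)
  have h2 : ∀ᶠ z : ℝ in nhdsWithin rho (Set.Iio rho), z < rho :=
    eventually_mem_nhdsWithin.mono (fun z hz => hz)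
  filter_upwards [h1, h2] with z hz0 hzρ
  -- pointwise identity
  have hzρ' : (0:ℝ) ≤ rho - z := by linarith
  have hfac : z ^ 2 - 3 * z + 1 = ((3 + Real.sqrt 5) / 2 - z) * (rho - z) := by
    rw [hρ]; linear_combination (1/4 : ℝ) * hs
  have hfacnn : (0:ℝ) ≤ (z ^ 2 + z + 1) * ((3 + Real.sqrt 5) / 2 - z) := by nlinarith
  have hsplit : Real.sqrt ((z ^ 2 + z + 1) * (z ^ 2 - 3 * z + 1))
      = Real.sqrt ((z ^ 2 + z + 1) * ((3 + Real.sqrt 5) / 2 - z)) * Real.sqrt (rho - z) := by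
    rw [hfac, show (z ^ 2 + z + 1) * (((3 + Real.sqrt 5) / 2 - z) * (rho - z))
      = ((z ^ 2 + z + 1) * ((3 + Real.sqrt 5) / 2 - z)) * (rho - z) by ring,
      Real.sqrt_mul hfacnn]
  have hS : Sfun z = Afun z - Bfun z * Real.sqrt (rho - z) := by
    unfold Sfun Afun Bfun
    rw [hsplit]; ring
  -- coefficient identity
  have h4 : Real.sqrt (8 * (3 * Real.sqrt 5 - 5) * (rho - z))
      = 2 * Real.sqrt (2 * (3 * Real.sqrt 5 - 5)) * Real.sqrt (rho - z) := by
    rw [show (8:ℝ) * (3 * Real.sqrt 5 - 5) * (rho - z)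
        = 4 * ((2 * (3 * Real.sqrt 5 - 5)) * (rho - z)) by ring,
      Real.sqrt_mul (by norm_num) , Real.sqrt_mul (by nlinarith) (rho - z),
      show Real.sqrt 4 = 2 by rw [show (4:ℝ) = 2 ^ 2 by norm_num, Real.sqrt_sq (by norm_num)]]
    ring
  have h5 : ((3:ℝ) - Real.sqrt 5) ^ 2 = 4 * rho ^ 2 := by rw [hρ]; ring
  have hcoef : Real.sqrt (8 * (3 * Real.sqrt 5 - 5) * (rho - z)) / (3 - Real.sqrt 5) ^ 2
      = Bfun rho * Real.sqrt (rho - z) := by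
    rw [h4, h5, hBρ]
    field_simp
    ring
  rw [hS, hAρ.symm, hcoef]
  ring
end

section
/- For u ∈ (0,1), setting g(z,u) = u z^2 (S(z) − 1)/(1 − uz), the composition f(g(z,u)) with f(w) = w/(1 − uw) is subcritical: g(ρ, u) = u(1 − ρ − ρ^2)/(2(1 − uρ)) < 1 = the radius of convergence of f in w, where ρ = (3 − √5)/2. -/
open Finset Filter Topology Asymptotics

/-- Subcriticality: with `g(z,u) = uz²(S(z)−1)/(1−uz)`, one has
`g(ρ,u) = u(1−ρ−ρ²)/(2(1−uρ)) < 1` for `u ∈ (0,1)`. -/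
theorem subcritical (u : ℝ) (hu0 : 0 < u) (hu1 : u < 1) :
    u * rho ^ 2 * (Sfun rho - 1) / (1 - u * rho) =
      u * (1 - rho - rho ^ 2) / (2 * (1 - u * rho)) ∧
    u * (1 - rho - rho ^ 2) / (2 * (1 - u * rho)) < 1 := by
  have hs : Real.sqrt 5 ^ 2 = 5 := Real.sq_sqrt (by norm_num)
  have hs2 : (2:ℝ) < Real.sqrt 5 := by
    nlinarith [Real.sqrt_nonneg 5, hs]
  have hs3 : Real.sqrt 5 < 3 := by
    nlinarith [Real.sqrt_nonneg 5, hs]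
  have hrho : rho = (3 - Real.sqrt 5) / 2 := rfl
  have hrpos : 0 < rho := by rw [hrho]; linarith
  have hrlt : rho < 1 / 2 := by rw [hrho]; linarith
  have hzero : (rho ^ 2 + rho + 1) * (rho ^ 2 - 3 * rho + 1) = 0 := by
    have : rho ^ 2 - 3 * rho + 1 = 0 := by rw [hrho]; nlinarith [hs]
    rw [this]; ring
  have hS : Sfun rho = (1 - rho + rho ^ 2) / (2 * rho ^ 2) := by
    unfold Sfun
    rw [hzero, Real.sqrt_zero]
    ring
  have hkey : rho ^ 2 * (Sfun rho - 1) = (1 - rho - rho ^ 2) / 2 := by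
    rw [hS]
    have hr2 : rho ^ 2 ≠ 0 := by positivity
    field_simp
    ring
  have hden : 0 < 1 - u * rho := by nlinarith
  constructor
  · rw [show u * rho ^ 2 * (Sfun rho - 1) = u * (rho ^ 2 * (Sfun rho - 1)) by ring, hkey]
    field_simp
  · rw [div_lt_one (by positivity)]
    have h1 : 1 - rho - rho ^ 2 = 2 * Real.sqrt 5 - 4 := by rw [hrho]; nlinarith [hs]
    rw [h1, hrho]
    nlinarith [hs]
end

section
/- Suppose P_n(u) = Σ_{d≥0} p(n,d) u^d and Q(u) = Σ_{d≥0} q(d) u^d are probability generating functions (p(n,d), q(d) ≥ 0 summing to at most 1), and P_n(u) → Q(u) pointwise for all u in a subset Ω of the open unit disc having an accumulation point in the interior of the disc. Then for every fixed d, p(n,d) → q(d) and Σ_{j≤d} p(n,j) → Σ_{j≤d} q(j) as n → ∞. -/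
open Finset Filter Topology

/-- Auxiliary: a power series with coefficients bounded by 1 converges on the unit ball. -/
lemma pgf_hasFPowerSeries (r : ℕ → ℝ) (hr0 : ∀ d, 0 ≤ r d) (hr1 : ∀ d, r d ≤ 1) :
    HasFPowerSeriesOnBall (fun u : ℂ => ∑' d : ℕ, (r d : ℂ) * u ^ d)
      (FormalMultilinearSeries.ofScalars ℂ (fun d => (r d : ℂ))) 0 1 := by
  set P := FormalMultilinearSeries.ofScalars ℂ (fun d => (r d : ℂ)) with hP
  have hrad : (1 : ENNReal) ≤ P.radius := by
    have : ((1 : NNReal) : ENNReal) ≤ P.radius := by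
      apply P.le_radius_of_bound 1
      intro n
      have : ‖P n‖ = ‖((r n : ℂ))‖ := FormalMultilinearSeries.ofScalars_norm ℂ _ n
      rw [this]
      simp only [NNReal.coe_one, one_pow, mul_one, Complex.norm_real, Real.norm_eq_abs]
      rw [abs_of_nonneg (hr0 n)]
      exact hr1 n
    simpa using this
  have hpos : 0 < P.radius := lt_of_lt_of_le one_pos hrad
  have h1 := (P.hasFPowerSeriesOnBall hpos).mono one_pos hrad
  have : P.sum = fun u : ℂ => ∑' d : ℕ, (r d : ℂ) * u ^ d := by
    funext u
    have := FormalMultilinearSeries.ofScalars_sum_eq (fun d => (r d : ℂ)) u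
    simpa [FormalMultilinearSeries.ofScalarsSum, smul_eq_mul] using this
  rwa [this] at h1

/-- Auxiliary: identification of coefficients from equality of sums on a set with an
accumulation point in the unit disc. -/
lemma pgf_coeff_unique (r s : ℕ → ℝ)
    (hr0 : ∀ d, 0 ≤ r d) (hr1 : ∀ d, r d ≤ 1)
    (hs0 : ∀ d, 0 ≤ s d) (hs1 : ∀ d, s d ≤ 1)
    (Ω : Set ℂ) (hΩ : Ω ⊆ Metric.ball (0 : ℂ) 1)
    (hacc : ∃ a ∈ Metric.ball (0 : ℂ) 1, AccPt a (Filter.principal Ω))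
    (heq : ∀ u ∈ Ω, ∑' d : ℕ, (r d : ℂ) * u ^ d = ∑' d : ℕ, (s d : ℂ) * u ^ d) :
    r = s := by
  obtain ⟨a, ha, hacc⟩ := hacc
  set F : ℂ → ℂ := fun u => ∑' d : ℕ, (r d : ℂ) * u ^ d
  set G : ℂ → ℂ := fun u => ∑' d : ℕ, (s d : ℂ) * u ^ d
  have hF := pgf_hasFPowerSeries r hr0 hr1
  have hG := pgf_hasFPowerSeries s hs0 hs1
  have hball : ∀ y : ℂ, y ∈ Metric.ball (0 : ℂ) 1 → y ∈ Metric.eball (0 : ℂ) 1 := by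
    intro y hy
    rw [Metric.mem_ball] at hy
    rw [EMetric.mem_ball, edist_dist]
    exact_mod_cast ENNReal.ofReal_lt_one.mpr hy
  have hFan : AnalyticOnNhd ℂ F (Metric.ball (0 : ℂ) 1) :=
    fun y hy => hF.analyticAt_of_mem (hball y hy)
  have hGan : AnalyticOnNhd ℂ G (Metric.ball (0 : ℂ) 1) :=
    fun y hy => hG.analyticAt_of_mem (hball y hy)
  have hfreq : ∃ᶠ z in nhdsWithin a {a}ᶜ, F z = G z := by
    rw [accPt_iff_frequently] at hacc
    rw [frequently_nhdsWithin_iff]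
    exact hacc.mono (fun z hz => ⟨heq z hz.2, hz.1⟩)
  have hEq : Set.EqOn F G (Metric.ball (0 : ℂ) 1) :=
    hFan.eqOn_of_preconnected_of_frequently_eq hGan
      (convex_ball (0 : ℂ) 1).isPreconnected ha hfreq
  have hnhds : F =ᶠ[nhds (0 : ℂ)] G :=
    Filter.eventuallyEq_of_mem
      (Metric.isOpen_ball.mem_nhds (by simp)) hEq
  have hPQ := (hF.hasFPowerSeriesAt.congr hnhds).eq_formalMultilinearSeries
      hG.hasFPowerSeriesAt
  have := FormalMultilinearSeries.ofScalars_series_injective ℂ ℂ hPQ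
  funext d
  have : ((r d : ℂ)) = (s d : ℂ) := congrFun this d
  exact_mod_cast this

/-- continuity theorem for probability generating functions.
If the probability generating functions `P_n` converge pointwise to `Q` on a subset
`Ω` of the open unit disc with an accumulation point inside the disc, then the
coefficients and partial sums converge. -/
theorem pgf_continuity (p : ℕ → ℕ → ℝ) (q : ℕ → ℝ)
    (hp : ∀ n d, 0 ≤ p n d) (hq : ∀ d, 0 ≤ q d)
    (hpsum : ∀ n, Summable (p n) ∧ ∑' d, p n d ≤ 1)
    (hqsum : Summable q ∧ ∑' d, q d ≤ 1)
    (Ω : Set ℂ) (hΩ : Ω ⊆ Metric.ball (0 : ℂ) 1)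
    (hacc : ∃ a ∈ Metric.ball (0 : ℂ) 1, AccPt a (Filter.principal Ω))
    (hconv : ∀ u ∈ Ω,
      Tendsto (fun n : ℕ => ∑' d : ℕ, (p n d : ℂ) * u ^ d)
        atTop (nhds (∑' d : ℕ, (q d : ℂ) * u ^ d))) :
    ∀ d : ℕ,
      Tendsto (fun n : ℕ => p n d) atTop (nhds (q d)) ∧
      Tendsto (fun n : ℕ => ∑ j ∈ Finset.range (d + 1), p n j) atTop
        (nhds (∑ j ∈ Finset.range (d + 1), q j)) := by
  -- basic bounds
  have hp1 : ∀ n d, p n d ≤ 1 := fun n d =>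
    le_trans (Summable.le_tsum (hpsum n).1 d (fun j _ => hp n j)) (hpsum n).2
  have hq1 : ∀ d, q d ≤ 1 := fun d =>
    le_trans (Summable.le_tsum hqsum.1 d (fun j _ => hq j)) hqsum.2
  -- the coefficient convergence, for all d
  have hcoeff : ∀ d : ℕ, Tendsto (fun n : ℕ => p n d) atTop (nhds (q d)) := by
    intro d
    apply tendsto_of_subseq_tendsto
    intro ns hns
    -- sequential compactness of [0,1]^ℕ
    have hcomp : IsCompact (Set.pi Set.univ (fun _ : ℕ => Set.Icc (0:ℝ) 1)) :=
      isCompact_univ_pi (fun _ => isCompact_Icc)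
    have hmem : ∀ k : ℕ, (fun j => p (ns k) j) ∈ Set.pi Set.univ (fun _ : ℕ => Set.Icc (0:ℝ) 1) :=
      fun k => fun j _ => ⟨hp _ j, hp1 _ j⟩
    obtain ⟨r, hrmem, φ, hφ, hφconv⟩ := hcomp.isSeqCompact.subseq_of_frequently_in
      (Frequently.of_forall hmem)
    have hpt : ∀ j : ℕ, Tendsto (fun k => p (ns (φ k)) j) atTop (nhds (r j)) := by
      intro j
      have := tendsto_pi_nhds.mp hφconv j
      simpa using this
    -- identify r with q using the generating function convergence
    have hr0 : ∀ j, 0 ≤ r j := fun j => (hrmem j (Set.mem_univ j)).1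
    have hr1 : ∀ j, r j ≤ 1 := fun j => (hrmem j (Set.mem_univ j)).2
    have hreq : r = q := by
      apply pgf_coeff_unique r q hr0 hr1 hq hq1 Ω hΩ hacc
      intro u hu
      have hu1 : ‖u‖ < 1 := by simpa [Metric.mem_ball, dist_zero_right] using hΩ hu
      -- dominated convergence for the subsequence
      have h1 : Tendsto (fun k => ∑' j : ℕ, (p (ns (φ k)) j : ℂ) * u ^ j) atTop
          (nhds (∑' j : ℕ, (r j : ℂ) * u ^ j)) := by
        apply tendsto_tsum_of_dominated_convergence
          (summable_geometric_of_lt_one (norm_nonneg u) hu1)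
        · intro j
          exact (Tendsto.comp (Complex.continuous_ofReal.tendsto (r j)) (hpt j)).mul_const (u ^ j)
        · filter_upwards with k j
          rw [norm_mul, norm_pow, Complex.norm_real, Real.norm_eq_abs,
            abs_of_nonneg (hp _ j)]
          exact mul_le_of_le_one_left (pow_nonneg (norm_nonneg u) j) (hp1 _ j)
      -- convergence to Q(u) along the subsequence
      have h2 : Tendsto (fun k => ∑' j : ℕ, (p (ns (φ k)) j : ℂ) * u ^ j) atTop
          (nhds (∑' j : ℕ, (q j : ℂ) * u ^ j)) :=
        (hconv u hu).comp (hns.comp hφ.tendsto_atTop)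
      exact tendsto_nhds_unique h1 h2
    exact ⟨φ, hreq ▸ hpt d⟩
  intro d
  refine ⟨hcoeff d, ?_⟩
  exact tendsto_finset_sum (Finset.range (d + 1)) (fun j _ => hcoeff j)
end

section
/- The generating function of r-canonical RNA secondary structures (minimum stack length r, no 1-arcs) is S_r(z) = (z^{2r} − (z−1)(z^{2r} − z^2 + 1) − √(p_r(z)))/(2 z^{2r}), where p_r(z) = (z^{2r} − (z−1)(z^{2r} − z^2 + 1))^2 − 4 z^{2r}(z^{2r} − z^2 + 1). -/
open Finset Filter Topology Asymptotics

/-- An `r`-canonical secondary structure: every maximal stack of parallel arcs has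
length at least `r`; equivalently every arc lies in a run of at least `r` parallel arcs. -/
def IsCanon (r n : ℕ) (A : Finset (ℕ × ℕ)) : Prop :=
  IsSecStr n A ∧ ∀ p ∈ A, ∃ s t : ℕ, r ≤ s + t + 1 ∧
    (∀ j ≤ s, (p.1 - j, p.2 + j) ∈ A) ∧ (∀ j ≤ t, (p.1 + j, p.2 - j) ∈ A)

/-- The polynomial `p_r(z)`. -/
noncomputable def prPoly (r : ℕ) (z : ℝ) : ℝ :=
  (z ^ (2 * r) - (z - 1) * (z ^ (2 * r) - z ^ 2 + 1)) ^ 2 -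
    4 * z ^ (2 * r) * (z ^ (2 * r) - z ^ 2 + 1)

/-- The generating function of `r`-canonical secondary structures, in closed form. -/
noncomputable def SrFun (r : ℕ) (z : ℝ) : ℝ :=
  (z ^ (2 * r) - (z - 1) * (z ^ (2 * r) - z ^ 2 + 1) - Real.sqrt (prPoly r z)) /
    (2 * z ^ (2 * r))

/-- `s_r(n)`: the number of `r`-canonical secondary structures of length `n`. -/
noncomputable def srCount (r n : ℕ) : ℕ :=
  Nat.card {A : Finset (ℕ × ℕ) // IsCanon r n A}

namespace CanonGF

/-- windowed secondary structure -/
def SecW (a b : ℕ) (A : Finset (ℕ × ℕ)) : Prop :=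
  (∀ p ∈ A, a ≤ p.1 ∧ p.1 < p.2 ∧ p.2 ≤ b ∧ p.2 ≠ p.1 + 1) ∧
  (∀ p ∈ A, ∀ q ∈ A, p ≠ q →
    p.1 ≠ q.1 ∧ p.1 ≠ q.2 ∧ p.2 ≠ q.1 ∧ p.2 ≠ q.2) ∧
  (∀ p ∈ A, ∀ q ∈ A, ¬ (p.1 < q.1 ∧ q.1 < p.2 ∧ p.2 < q.2))

def CanW (r a b : ℕ) (A : Finset (ℕ × ℕ)) : Prop :=
  SecW a b A ∧ ∀ p ∈ A, ∃ s t : ℕ, r ≤ s + t + 1 ∧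
    (∀ j ≤ s, (p.1 - j, p.2 + j) ∈ A) ∧ (∀ j ≤ t, (p.1 + j, p.2 - j) ∈ A)

lemma isCanon_iff_canW (r n : ℕ) (A : Finset (ℕ × ℕ)) : IsCanon r n A ↔ CanW r 1 n A :=
  Iff.rfl

def up (k : ℕ) (p : ℕ × ℕ) : ℕ × ℕ := (p.1 + k, p.2 + k)
def down (k : ℕ) (p : ℕ × ℕ) : ℕ × ℕ := (p.1 - k, p.2 - k)

lemma down_up (k : ℕ) (p : ℕ × ℕ) : down k (up k p) = p := by
  simp [down, up]

lemma up_down (k : ℕ) (p : ℕ × ℕ) (h1 : k ≤ p.1) (h2 : k ≤ p.2) : up k (down k p) = p := by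
  obtain ⟨x, y⟩ := p
  simp only [down, up, Prod.mk.injEq]
  constructor <;> omega

lemma canW_mono {r a b a' b' : ℕ} {A : Finset (ℕ × ℕ)} (h : CanW r a b A)
    (ha : a' ≤ a) (hb : b ≤ b') : CanW r a' b' A := by
  obtain ⟨⟨h1, h2, h3⟩, h4⟩ := h
  exact ⟨⟨fun p hp => by have := h1 p hp; omega, h2, h3⟩, h4⟩

lemma canW_up {r a b : ℕ} (k : ℕ) {A : Finset (ℕ × ℕ)} (ha : 1 ≤ a) (h : CanW r a b A) :
    CanW r (a + k) (b + k) (A.image (up k)) := by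
  obtain ⟨⟨h1, h2, h3⟩, h4⟩ := h
  have hmem : ∀ q ∈ A.image (up k), ∃ p ∈ A, up k p = q := by
    intro q hq; simpa [Finset.mem_image] using hq
  refine ⟨⟨?_, ?_, ?_⟩, ?_⟩
  · intro q hq
    obtain ⟨p, hp, rfl⟩ := hmem q hq
    have := h1 p hp; simp [up]; omega
  · intro q hq q' hq' hne
    obtain ⟨p, hp, rfl⟩ := hmem q hq
    obtain ⟨p', hp', rfl⟩ := hmem q' hq'
    have hne' : p ≠ p' := by rintro rfl; exact hne rfl
    have := h2 p hp p' hp' hne'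
    have w1 := h1 p hp; have w2 := h1 p' hp'
    simp [up] at *; omega
  · intro q hq q' hq'
    obtain ⟨p, hp, rfl⟩ := hmem q hq
    obtain ⟨p', hp', rfl⟩ := hmem q' hq'
    have := h3 p hp p' hp'
    simp [up]; omega
  · intro q hq
    obtain ⟨p, hp, rfl⟩ := hmem q hq
    obtain ⟨s, t, hst, hup, hdn⟩ := h4 p hp
    refine ⟨s, t, hst, ?_, ?_⟩
    · intro j hj
      have hm := hup j hj
      have hw := h1 _ hm
      have hw1 := hw.1
      have : up k (p.1 - j, p.2 + j) = ((up k p).1 - j, (up k p).2 + j) := by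
        simp only [up, Prod.mk.injEq]; constructor <;> omega
      rw [← this]
      exact Finset.mem_image_of_mem _ hm
    · intro j hj
      have hm := hdn j hj
      have hw := h1 _ hm
      have hw2 := hw.2.1
      have : up k (p.1 + j, p.2 - j) = ((up k p).1 + j, (up k p).2 - j) := by
        simp only [up, Prod.mk.injEq]; constructor <;> omega
      rw [← this]
      exact Finset.mem_image_of_mem _ hm

lemma canW_down {r a b : ℕ} (k : ℕ) {A : Finset (ℕ × ℕ)} (ha : 1 ≤ a)
    (h : CanW r (a + k) (b + k) A) : CanW r a b (A.image (down k)) := by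
  obtain ⟨⟨h1, h2, h3⟩, h4⟩ := h
  have hmem : ∀ q ∈ A.image (down k), ∃ p ∈ A, down k p = q := by
    intro q hq; simpa [Finset.mem_image] using hq
  refine ⟨⟨?_, ?_, ?_⟩, ?_⟩
  · intro q hq
    obtain ⟨p, hp, rfl⟩ := hmem q hq
    have := h1 p hp; simp [down]; omega
  · intro q hq q' hq' hne
    obtain ⟨p, hp, rfl⟩ := hmem q hq
    obtain ⟨p', hp', rfl⟩ := hmem q' hq'
    have hne' : p ≠ p' := by rintro rfl; exact hne rfl
    have := h2 p hp p' hp' hne'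
    have w1 := h1 p hp; have w2 := h1 p' hp'
    simp [down] at *; omega
  · intro q hq q' hq'
    obtain ⟨p, hp, rfl⟩ := hmem q hq
    obtain ⟨p', hp', rfl⟩ := hmem q' hq'
    have := h3 p hp p' hp'
    have w1 := h1 p hp; have w2 := h1 p' hp'
    simp [down]; omega
  · intro q hq
    obtain ⟨p, hp, rfl⟩ := hmem q hq
    have hwp := h1 p hp
    obtain ⟨s, t, hst, hup, hdn⟩ := h4 p hp
    refine ⟨s, t, hst, ?_, ?_⟩
    · intro j hj
      have hm := hup j hj
      have hw := h1 _ hm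
      have hw1 := hw.1
      have hwp1 := hwp.1
      have : down k (p.1 - j, p.2 + j) = ((down k p).1 - j, (down k p).2 + j) := by
        simp only [down, Prod.mk.injEq]; constructor <;> omega
      rw [← this]
      exact Finset.mem_image_of_mem _ hm
    · intro j hj
      have hm := hdn j hj
      have hw := h1 _ hm
      have hw1 := hw.1
      have hw2 := hw.2.1
      have hwp1 := hwp.1
      have : down k (p.1 + j, p.2 - j) = ((down k p).1 + j, (down k p).2 - j) := by
        simp only [down, Prod.mk.injEq]; constructor <;> omega
      rw [← this]
      exact Finset.mem_image_of_mem _ hm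

lemma canW_union {r a b c d : ℕ} {A B : Finset (ℕ × ℕ)}
    (hA : CanW r a b A) (hB : CanW r c d B) (hbc : b < c) (hac : a ≤ c) (hbd : b ≤ d) :
    CanW r a d (A ∪ B) := by
  obtain ⟨⟨a1, a2, a3⟩, a4⟩ := hA
  obtain ⟨⟨b1, b2, b3⟩, b4⟩ := hB
  refine ⟨⟨?_, ?_, ?_⟩, ?_⟩
  · intro p hp
    rcases Finset.mem_union.1 hp with h | h
    · have := a1 p h; omega
    · have := b1 p h; omega
  · intro p hp q hq hne
    rcases Finset.mem_union.1 hp with h | h <;> rcases Finset.mem_union.1 hq with h' | h'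
    · exact a2 p h q h' hne
    · have := a1 p h; have := b1 q h'; omega
    · have := a1 q h'; have := b1 p h; omega
    · exact b2 p h q h' hne
  · intro p hp q hq
    rcases Finset.mem_union.1 hp with h | h <;> rcases Finset.mem_union.1 hq with h' | h'
    · exact a3 p h q h'
    · have := a1 p h; have := b1 q h'; omega
    · have := a1 q h'; have := b1 p h; omega
    · exact b3 p h q h'
  · intro p hp
    rcases Finset.mem_union.1 hp with h | h
    · obtain ⟨s, t, hst, hu, hd⟩ := a4 p h
      exact ⟨s, t, hst, fun j hj => Finset.mem_union_left _ (hu j hj),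
        fun j hj => Finset.mem_union_left _ (hd j hj)⟩
    · obtain ⟨s, t, hst, hu, hd⟩ := b4 p h
      exact ⟨s, t, hst, fun j hj => Finset.mem_union_right _ (hu j hj),
        fun j hj => Finset.mem_union_right _ (hd j hj)⟩



lemma arcs_split {r n j : ℕ} {A : Finset (ℕ × ℕ)} (h : CanW r 1 n A) (hj : (1, j) ∈ A) :
    ∀ p ∈ A, j < p.2 → j < p.1 := by
  intro p hp h2
  by_contra hc
  push_neg at hc
  have hw := h.1.1 p hp
  have hne : p ≠ (1, j) := by
    rintro rfl; exact absurd h2 (by simp)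
  have hmt := h.1.2.1 p hp (1, j) hj hne
  have hcr := h.1.2.2 (1, j) hj p hp
  simp only [not_and_or, not_lt] at hcr
  rcases hcr with h' | h' | h' <;> omega

lemma restrict_left {r n j : ℕ} {A : Finset (ℕ × ℕ)} (h : CanW r 1 n A) (hj : (1, j) ∈ A) :
    CanW r 1 j (A.filter (fun p => p.2 ≤ j)) := by
  have hsub : A.filter (fun p => p.2 ≤ j) ⊆ A := Finset.filter_subset _ _
  refine ⟨⟨?_, ?_, ?_⟩, ?_⟩
  · intro p hp
    obtain ⟨hpA, hpj⟩ := Finset.mem_filter.1 hp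
    have := h.1.1 p hpA; omega
  · intro p hp q hq hne; exact h.1.2.1 p (hsub hp) q (hsub hq) hne
  · intro p hp q hq; exact h.1.2.2 p (hsub hp) q (hsub hq)
  · intro p hp
    obtain ⟨hpA, hpj⟩ := Finset.mem_filter.1 hp
    have hw := h.1.1 p hpA
    obtain ⟨s, t, hst, hu, hd⟩ := h.2 p hpA
    refine ⟨s, t, hst, ?_, ?_⟩
    · intro i hi
      have hm := hu i hi
      refine Finset.mem_filter.2 ⟨hm, ?_⟩
      by_contra hc
      push_neg at hc
      have := arcs_split h hj _ hm hc
      simp at this; omega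
    · intro i hi
      have hm := hd i hi
      refine Finset.mem_filter.2 ⟨hm, ?_⟩
      simp; omega

lemma restrict_right {r n j : ℕ} {A : Finset (ℕ × ℕ)} (h : CanW r 1 n A) (hj : (1, j) ∈ A) :
    CanW r (j + 1) n (A.filter (fun p => j < p.2)) := by
  have hsub : A.filter (fun p => j < p.2) ⊆ A := Finset.filter_subset _ _
  refine ⟨⟨?_, ?_, ?_⟩, ?_⟩
  · intro p hp
    obtain ⟨hpA, hpj⟩ := Finset.mem_filter.1 hp
    have := h.1.1 p hpA
    have := arcs_split h hj p hpA hpj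
    omega
  · intro p hp q hq hne; exact h.1.2.1 p (hsub hp) q (hsub hq) hne
  · intro p hp q hq; exact h.1.2.2 p (hsub hp) q (hsub hq)
  · intro p hp
    obtain ⟨hpA, hpj⟩ := Finset.mem_filter.1 hp
    have hw := h.1.1 p hpA
    have hp1 := arcs_split h hj p hpA hpj
    obtain ⟨s, t, hst, hu, hd⟩ := h.2 p hpA
    refine ⟨s, t, hst, ?_, ?_⟩
    · intro i hi
      have hm := hu i hi
      refine Finset.mem_filter.2 ⟨hm, ?_⟩
      simp; omega
    · intro i hi
      have hm := hd i hi
      have hwq := h.1.1 _ hm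
      refine Finset.mem_filter.2 ⟨hm, ?_⟩
      simp only []
      omega

/-- the top stack of `k` arcs for a closed structure of length `m` -/
def stk (k m : ℕ) : Finset (ℕ × ℕ) := (Finset.range k).image (fun i => (i + 1, m - i))

lemma mem_stk {k m : ℕ} {p : ℕ × ℕ} : p ∈ stk k m ↔ ∃ i, i < k ∧ p = (i + 1, m - i) := by
  simp [stk, Finset.mem_image, eq_comm]

lemma stk_succ (k m : ℕ) : stk (k + 1) m = insert (k + 1, m - k) (stk k m) := by
  simp [stk, Finset.range_add_one]

lemma stack_join {r k m : ℕ} {B : Finset (ℕ × ℕ)} (hk : r ≤ k) (hk1 : 1 ≤ k)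
    (hm : 2 * k + 1 ≤ m) (hB : CanW r (k + 1) (m - k) B) :
    CanW r 1 m (stk k m ∪ B) := by
  have hBw := hB.1.1
  refine ⟨⟨?_, ?_, ?_⟩, ?_⟩
  · intro p hp
    rcases Finset.mem_union.1 hp with h | h
    · obtain ⟨i, hik, rfl⟩ := mem_stk.1 h
      simp; omega
    · have := hBw p h; omega
  · intro p hp q hq hne
    rcases Finset.mem_union.1 hp with h | h <;> rcases Finset.mem_union.1 hq with h' | h'
    · obtain ⟨i, hik, rfl⟩ := mem_stk.1 h
      obtain ⟨i', hik', rfl⟩ := mem_stk.1 h'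
      have : i ≠ i' := by rintro rfl; exact hne rfl
      simp; omega
    · obtain ⟨i, hik, rfl⟩ := mem_stk.1 h
      have := hBw q h'; simp; omega
    · obtain ⟨i, hik, rfl⟩ := mem_stk.1 h'
      have := hBw p h; simp; omega
    · exact hB.1.2.1 p h q h' hne
  · intro p hp q hq
    rcases Finset.mem_union.1 hp with h | h <;> rcases Finset.mem_union.1 hq with h' | h'
    · obtain ⟨i, hik, rfl⟩ := mem_stk.1 h
      obtain ⟨i', hik', rfl⟩ := mem_stk.1 h'
      simp; omega
    · obtain ⟨i, hik, rfl⟩ := mem_stk.1 h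
      have := hBw q h'; simp; omega
    · obtain ⟨i, hik, rfl⟩ := mem_stk.1 h'
      have := hBw p h; simp; omega
    · exact hB.1.2.2 p h q h'
  · intro p hp
    rcases Finset.mem_union.1 hp with h | h
    · obtain ⟨i, hik, rfl⟩ := mem_stk.1 h
      refine ⟨i, k - 1 - i, by omega, ?_, ?_⟩
      · intro j hj
        refine Finset.mem_union_left _ (mem_stk.2 ⟨i - j, by omega, ?_⟩)
        simp only [Prod.mk.injEq]
        constructor <;> omega
      · intro j hj
        refine Finset.mem_union_left _ (mem_stk.2 ⟨i + j, by omega, ?_⟩)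
        simp only [Prod.mk.injEq]
        constructor <;> omega
    · obtain ⟨s, t, hst, hu, hd⟩ := hB.2 p h
      exact ⟨s, t, hst, fun j hj => Finset.mem_union_right _ (hu j hj),
        fun j hj => Finset.mem_union_right _ (hd j hj)⟩

lemma stack_conf {r k m : ℕ} {A : Finset (ℕ × ℕ)} (h : CanW r 1 m A)
    (hs : stk k m ⊆ A) (hm : 2 * k + 1 ≤ m) :
    ∀ p ∈ A, p ∉ stk k m → k + 1 ≤ p.1 ∧ p.2 ≤ m - k := by
  intro p hp hns
  have hw := h.1.1 p hp
  constructor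
  · by_contra hc
    push_neg at hc
    have hq : (p.1, m - (p.1 - 1)) ∈ stk k m := by
      rw [mem_stk]
      exact ⟨p.1 - 1, by omega, by simp only [Prod.mk.injEq, and_true, true_and]; omega⟩
    have hne : p ≠ (p.1, m - (p.1 - 1)) := by
      rintro he; exact hns (he ▸ hq)
    have := h.1.2.1 p hp _ (hs hq) hne
    simp at this
  · by_contra hc
    push_neg at hc
    have hq : (m - p.2 + 1, p.2) ∈ stk k m := by
      rw [mem_stk]
      exact ⟨m - p.2, by omega, by simp only [Prod.mk.injEq, and_true, true_and]; omega⟩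
    have hne : p ≠ (m - p.2 + 1, p.2) := by
      rintro he; exact hns (he ▸ hq)
    have := h.1.2.1 p hp _ (hs hq) hne
    simp at this

lemma stack_peel {r k m : ℕ} {A : Finset (ℕ × ℕ)} (h : CanW r 1 m A)
    (hs : stk k m ⊆ A) (hns : (k + 1, m - k) ∉ A) (hm : 2 * k + 1 ≤ m) (hk : 1 ≤ k) :
    CanW r (k + 1) (m - k) (A \ stk k m) := by
  have conf := stack_conf h hs hm
  have hfst : ∀ q ∈ A, k + 1 ≤ q.1 → q ∈ A \ stk k m := by
    intro q hq hq1
    refine Finset.mem_sdiff.2 ⟨hq, fun hqs => ?_⟩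
    obtain ⟨i, hik, rfl⟩ := mem_stk.1 hqs
    simp at hq1; omega
  refine ⟨⟨?_, ?_, ?_⟩, ?_⟩
  · intro p hp
    obtain ⟨hpA, hpns⟩ := Finset.mem_sdiff.1 hp
    have := h.1.1 p hpA
    have := conf p hpA hpns
    omega
  · intro p hp q hq hne
    exact h.1.2.1 p (Finset.mem_sdiff.1 hp).1 q (Finset.mem_sdiff.1 hq).1 hne
  · intro p hp q hq
    exact h.1.2.2 p (Finset.mem_sdiff.1 hp).1 q (Finset.mem_sdiff.1 hq).1
  · intro p hp
    obtain ⟨hpA, hpns⟩ := Finset.mem_sdiff.1 hp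
    have hw := h.1.1 p hpA
    have hcp := conf p hpA hpns
    obtain ⟨s, t, hst, hu, hd⟩ := h.2 p hpA
    have key : ∀ i ≤ s, k + 1 ≤ p.1 - i := by
      by_contra hc
      push_neg at hc
      obtain ⟨i, his, hik⟩ := hc
      set i0 := p.1 - k with hi0
      have hi01 : 1 ≤ i0 := by omega
      have hi0s : i0 ≤ s := by omega
      have hq := hu i0 hi0s
      have hq1 : p.1 - i0 = k := by omega
      have hqstk : (k, m - (k - 1)) ∈ stk k m := by
        rw [mem_stk]
        exact ⟨k - 1, by omega, by simp only [Prod.mk.injEq, and_true, true_and]; omega⟩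
      have heq : (p.1 - i0, p.2 + i0) = (k, m - (k - 1)) := by
        by_contra hne
        have := h.1.2.1 _ hq _ (hs hqstk) hne
        simp only [Prod.mk.injEq] at this ⊢
        omega
      have hsum : p.2 + i0 = m - (k - 1) := by
        have := congrArg Prod.snd heq; simpa using this
      have hq' := hu (i0 - 1) (by omega)
      have heq' : (p.1 - (i0 - 1), p.2 + (i0 - 1)) = (k + 1, m - k) := by
        simp only [Prod.mk.injEq]
        constructor <;> omega
      rw [heq'] at hq'
      exact hns hq'
    refine ⟨s, t, hst, ?_, ?_⟩
    · intro i hi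
      exact hfst _ (hu i hi) (key i hi)
    · intro i hi
      have hm' := hd i hi
      exact hfst _ hm' (by omega)


open Classical in
/-- all `r`-canonical structures of length `n`, as a finset -/
noncomputable def SSet (r n : ℕ) : Finset (Finset (ℕ × ℕ)) :=
  ((Finset.Iic n ×ˢ Finset.Iic n).powerset).filter (fun A => IsCanon r n A)

lemma mem_SSet {r n : ℕ} {A : Finset (ℕ × ℕ)} : A ∈ SSet r n ↔ IsCanon r n A := by
  classical
  constructor
  · exact fun h => (Finset.mem_filter.1 h).2
  · intro h
    refine Finset.mem_filter.2 ⟨Finset.mem_powerset.2 ?_, h⟩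
    intro p hp
    have hw := h.1.1 p hp
    simp only [Finset.mem_product, Finset.mem_Iic]
    omega

open Classical in
/-- closed canonical structures: `(1,m)` is an arc -/
noncomputable def CSet (r m : ℕ) : Finset (Finset (ℕ × ℕ)) :=
  (SSet r m).filter (fun A => (1, m) ∈ A)

open Classical in
noncomputable def NSet (r m : ℕ) : Finset (Finset (ℕ × ℕ)) :=
  (SSet r m).filter (fun A => (1, m) ∉ A)

noncomputable def sc (r n : ℕ) : ℕ := (SSet r n).card
noncomputable def cc (r n : ℕ) : ℕ := (CSet r n).card
noncomputable def dd (r n : ℕ) : ℕ := if n = 0 then 0 else (NSet r n).card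
def gam (r n : ℕ) : ℕ := if 2 * r ≤ n ∧ Even n then 1 else 0

lemma srCount_eq (r n : ℕ) : srCount r n = sc r n := by
  rw [srCount, sc, ← Nat.card_eq_finsetCard]
  exact Nat.card_congr (Equiv.subtypeEquivRight fun A => mem_SSet.symm)

lemma empty_canon (r n : ℕ) : IsCanon r n ∅ := by
  refine ⟨⟨?_, ?_, ?_⟩, ?_⟩ <;> simp

lemma sc_zero (r : ℕ) : sc r 0 = 1 := by
  have : SSet r 0 = {∅} := by
    ext A
    simp only [mem_SSet, Finset.mem_singleton]
    constructor
    · intro h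
      rw [Finset.eq_empty_iff_forall_notMem]
      intro p hp
      have := h.1.1 p hp
      omega
    · rintro rfl; exact empty_canon r 0
  rw [sc, this, Finset.card_singleton]

lemma cc_small {r m : ℕ} (h : m ≤ 2) : cc r m = 0 := by
  rw [cc, Finset.card_eq_zero]
  rw [Finset.eq_empty_iff_forall_notMem]
  intro A hA
  obtain ⟨hS, hm⟩ := Finset.mem_filter.1 hA
  have := (mem_SSet.1 hS).1.1 _ hm
  simp at this; omega

lemma cc_le (r n : ℕ) : cc r n ≤ sc r n := Finset.card_le_card (Finset.filter_subset _ _)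

lemma dd_le (r n : ℕ) : dd r n ≤ sc r n := by
  rw [dd]
  split
  · exact Nat.zero_le _
  · exact Finset.card_le_card (Finset.filter_subset _ _)

lemma cc_add_dd {r n : ℕ} (hn : 1 ≤ n) : cc r n + dd r n = sc r n := by
  classical
  rw [cc, dd, if_neg (by omega : ¬ n = 0), sc]
  rw [← Finset.card_union_of_disjoint (s := CSet r n) (t := NSet r n) ?hd]
  case hd =>
    rw [Finset.disjoint_left]
    intro A hA hA'
    exact (Finset.mem_filter.1 hA').2 (Finset.mem_filter.1 hA).2
  congr 1
  ext A
  simp only [CSet, NSet, Finset.mem_union, Finset.mem_filter]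
  tauto

lemma canW_tighten {r a b a' : ℕ} {A : Finset (ℕ × ℕ)} (h : CanW r a b A)
    (h' : ∀ p ∈ A, a' ≤ p.1) : CanW r a' b A :=
  ⟨⟨fun p hp => by have := h.1.1 p hp; have := h' p hp; omega, h.1.2.1, h.1.2.2⟩, h.2⟩

lemma image_down_up (k : ℕ) (B : Finset (ℕ × ℕ)) : (B.image (up k)).image (down k) = B := by
  rw [Finset.image_image]
  have h : (down k ∘ up k) = id := funext (down_up k)
  rw [h, Finset.image_id]

lemma image_up_down (k : ℕ) {A : Finset (ℕ × ℕ)} (h : ∀ p ∈ A, k ≤ p.1 ∧ k ≤ p.2) :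
    (A.image (down k)).image (up k) = A := by
  rw [Finset.image_image]
  have h2 : ∀ p ∈ A, (up k ∘ down k) p = id p := fun p hp =>
    up_down k p (h p hp).1 (h p hp).2
  rw [Finset.image_congr h2, Finset.image_id]

lemma card_D0 (r n : ℕ) (hn : 1 ≤ n) :
    ((SSet r n).filter (fun A => ∀ p ∈ A, p.1 ≠ 1)).card = sc r (n - 1) := by
  rw [sc]
  refine Finset.card_bij' (fun A _ => A.image (down 1)) (fun B _ => B.image (up 1))
    ?hi ?hj ?li ?ri
  case hi =>
    intro A hA
    obtain ⟨hS, h1⟩ := Finset.mem_filter.1 hA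
    have hC : CanW r 1 n A := mem_SSet.1 hS
    have hC2 : CanW r 2 n A := canW_tighten hC (fun p hp => by
      have := hC.1.1 p hp; have := h1 p hp; omega)
    have h' : CanW r (1 + 1) (n - 1 + 1) A := by
      rw [show n - 1 + 1 = n by omega]; exact hC2
    exact mem_SSet.2 (canW_down 1 (le_refl 1) h')
  case hj =>
    intro B hB
    have hC : CanW r 1 (n - 1) B := mem_SSet.1 hB
    have hup : CanW r (1 + 1) (n - 1 + 1) (B.image (up 1)) := canW_up 1 (le_refl 1) hC
    rw [show n - 1 + 1 = n by omega] at hup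
    refine Finset.mem_filter.2 ⟨mem_SSet.2 (canW_mono hup (by omega) (le_refl n)), ?_⟩
    intro p hp
    obtain ⟨q, hq, rfl⟩ := Finset.mem_image.1 hp
    have := hC.1.1 q hq
    simp [up]
    omega
  case li =>
    intro A hA
    obtain ⟨hS, h1⟩ := Finset.mem_filter.1 hA
    have hC : CanW r 1 n A := mem_SSet.1 hS
    exact image_up_down 1 (fun p hp => by have := hC.1.1 p hp; omega)
  case ri =>
    intro B hB
    exact image_down_up 1 B

lemma card_fiber_closed (r n j : ℕ) (h3 : 3 ≤ j) (hjn : j ≤ n) :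
    ((SSet r n).filter (fun A => (1, j) ∈ A)).card = cc r j * sc r (n - j) := by
  classical
  rw [cc, sc, ← Finset.card_product]
  refine Finset.card_bij'
    (fun A _ => (A.filter (fun p => p.2 ≤ j), (A.filter (fun p => j < p.2)).image (down j)))
    (fun BC _ => BC.1 ∪ BC.2.image (up j)) ?hi ?hj ?li ?ri
  case hi =>
    intro A hA
    obtain ⟨hS, hcl⟩ := Finset.mem_filter.1 hA
    have hC : CanW r 1 n A := mem_SSet.1 hS
    refine Finset.mem_product.2 ⟨?_, ?_⟩
    · refine Finset.mem_filter.2 ⟨mem_SSet.2 (restrict_left hC hcl), ?_⟩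
      exact Finset.mem_filter.2 ⟨hcl, le_refl j⟩
    · have hR : CanW r (j + 1) n (A.filter (fun p => j < p.2)) := restrict_right hC hcl
      have h' : CanW r (1 + j) (n - j + j) (A.filter (fun p => j < p.2)) := by
        rw [show n - j + j = n by omega]
        exact canW_mono hR (by omega) (le_refl n)
      exact mem_SSet.2 (canW_down j (le_refl 1) h')
  case hj =>
    intro BC hBC
    obtain ⟨hB, hCm⟩ := Finset.mem_product.1 hBC
    obtain ⟨hBS, hBcl⟩ := Finset.mem_filter.1 hB
    have hBC1 : CanW r 1 j BC.1 := mem_SSet.1 hBS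
    have hC1 : CanW r 1 (n - j) BC.2 := mem_SSet.1 hCm
    have hup : CanW r (1 + j) (n - j + j) (BC.2.image (up j)) := canW_up j (le_refl 1) hC1
    rw [show n - j + j = n by omega] at hup
    have hun : CanW r 1 n (BC.1 ∪ BC.2.image (up j)) := by
      refine canW_union hBC1 hup ?_ ?_ ?_ <;> omega
    exact Finset.mem_filter.2 ⟨mem_SSet.2 hun, Finset.mem_union_left _ hBcl⟩
  case li =>
    intro A hA
    obtain ⟨hS, hcl⟩ := Finset.mem_filter.1 hA
    have hC : CanW r 1 n A := mem_SSet.1 hS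
    simp only
    rw [image_up_down j (fun p hp => by
      obtain ⟨hpA, hpj⟩ := Finset.mem_filter.1 hp
      have := hC.1.1 p hpA
      have := arcs_split hC hcl p hpA hpj
      omega)]
    have hcongr : A.filter (fun p => j < p.2) = A.filter (fun p => ¬ (p.2 ≤ j)) := by
      apply Finset.filter_congr
      intro p hp
      simp only [not_le]
    rw [hcongr, Finset.filter_union_filter_not_eq]
  case ri =>
    intro BC hBC
    obtain ⟨hB, hCm⟩ := Finset.mem_product.1 hBC
    obtain ⟨hBS, hBcl⟩ := Finset.mem_filter.1 hB
    have hBC1 : CanW r 1 j BC.1 := mem_SSet.1 hBS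
    have hC1 : CanW r 1 (n - j) BC.2 := mem_SSet.1 hCm
    have hB_all : ∀ p ∈ BC.1, p.2 ≤ j := fun p hp => (hBC1.1.1 p hp).2.2.1
    have hup_all : ∀ p ∈ BC.2.image (up j), j < p.2 := by
      intro p hp
      obtain ⟨q, hq, rfl⟩ := Finset.mem_image.1 hp
      have := hC1.1.1 q hq
      simp only [up]
      omega
    have e1 : (BC.1 ∪ BC.2.image (up j)).filter (fun p => p.2 ≤ j) = BC.1 := by
      rw [Finset.filter_union]
      rw [Finset.filter_true_of_mem hB_all]
      rw [Finset.filter_false_of_mem (fun p hp => by have := hup_all p hp; omega)]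
      exact Finset.union_empty _
    have e2 : (BC.1 ∪ BC.2.image (up j)).filter (fun p => j < p.2) = BC.2.image (up j) := by
      rw [Finset.filter_union]
      rw [Finset.filter_false_of_mem (fun p hp => by have := hB_all p hp; omega)]
      rw [Finset.filter_true_of_mem hup_all]
      exact Finset.empty_union _
    rw [e1, e2, image_down_up]

theorem rec1 (r n : ℕ) (hn : 1 ≤ n) :
    sc r n = sc r (n - 1) + ∑ j ∈ Finset.range (n + 1), cc r j * sc r (n - j) := by
  classical
  have hsplit : SSet r n =
      ((SSet r n).filter (fun A => ∀ p ∈ A, p.1 ≠ 1)) ∪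
      (Finset.Icc 3 n).biUnion (fun j => (SSet r n).filter (fun A => (1, j) ∈ A)) := by
    ext A
    simp only [Finset.mem_union, Finset.mem_biUnion, Finset.mem_filter, Finset.mem_Icc]
    constructor
    · intro hA
      by_cases hc : ∀ p ∈ A, p.1 ≠ 1
      · exact Or.inl ⟨hA, hc⟩
      · push_neg at hc
        obtain ⟨p, hp, hp1⟩ := hc
        have hw := (mem_SSet.1 hA).1.1 p hp
        refine Or.inr ⟨p.2, ⟨by omega, by omega⟩, hA, ?_⟩
        rw [← hp1, Prod.mk.eta]
        exact hp
    · rintro (⟨h, _⟩ | ⟨j, _, h, _⟩) <;> exact h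
  have hdisj : Disjoint ((SSet r n).filter (fun A => ∀ p ∈ A, p.1 ≠ 1))
      ((Finset.Icc 3 n).biUnion (fun j => (SSet r n).filter (fun A => (1, j) ∈ A))) := by
    rw [Finset.disjoint_left]
    intro A hA hA'
    obtain ⟨_, h1⟩ := Finset.mem_filter.1 hA
    obtain ⟨j, hj, hAj⟩ := Finset.mem_biUnion.1 hA'
    obtain ⟨_, h2⟩ := Finset.mem_filter.1 hAj
    exact h1 (1, j) h2 rfl
  have hpair : ∀ x ∈ Finset.Icc 3 n, ∀ y ∈ Finset.Icc 3 n, x ≠ y →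
      Disjoint ((SSet r n).filter (fun A => (1, x) ∈ A))
        ((SSet r n).filter (fun A => (1, y) ∈ A)) := by
    intro x hx y hy hxy
    rw [Finset.disjoint_left]
    intro A hA hA'
    obtain ⟨hS, h1⟩ := Finset.mem_filter.1 hA
    obtain ⟨_, h2⟩ := Finset.mem_filter.1 hA'
    have hne : ((1 : ℕ), x) ≠ (1, y) := by simp [hxy]
    have := (mem_SSet.1 hS).1.2.1 _ h1 _ h2 hne
    simp at this
  have hcard : sc r n = ((SSet r n).filter (fun A => ∀ p ∈ A, p.1 ≠ 1)).card
      + ∑ j ∈ Finset.Icc 3 n, ((SSet r n).filter (fun A => (1, j) ∈ A)).card := by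
    rw [sc]
    conv_lhs => rw [hsplit]
    rw [Finset.card_union_of_disjoint hdisj, Finset.card_biUnion hpair]
  rw [hcard, card_D0 r n hn]
  congr 1
  have hsum : ∀ j ∈ Finset.Icc 3 n, ((SSet r n).filter (fun A => (1, j) ∈ A)).card
      = cc r j * sc r (n - j) := fun j hj => by
    obtain ⟨h3', hjn⟩ := Finset.mem_Icc.1 hj
    exact card_fiber_closed r n j h3' hjn
  rw [Finset.sum_congr rfl hsum]
  apply Finset.sum_subset
  · intro j hj
    simp only [Finset.mem_Icc, Finset.mem_range] at *
    omega
  · intro j hj hj'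
    simp only [Finset.mem_Icc, Finset.mem_range] at hj hj'
    have h2 : j ≤ 2 ∨ n < j := by omega
    rcases h2 with h | h
    · rw [cc_small h, Nat.zero_mul]
    · omega


lemma stk_one (m : ℕ) : stk 1 m = {(1, m)} := by simp [stk]

theorem rec2 (r m : ℕ) (hr : 1 ≤ r) :
    cc r m = ∑ j ∈ Finset.range (m + 1), gam r j * dd r (m - j) := by
  classical
  have hsplit : CSet r m = (Finset.Icc r m).biUnion
      (fun k => (SSet r m).filter (fun A => stk k m ⊆ A ∧ (k + 1, m - k) ∉ A)) := by
    ext A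
    constructor
    · intro hA
      obtain ⟨hS, hcl⟩ := Finset.mem_filter.1 hA
      have hC : CanW r 1 m A := mem_SSet.1 hS
      have hm3 : 3 ≤ m := by
        have := hC.1.1 _ hcl; simp at this; omega
      set P : ℕ → Prop := fun k => stk k m ⊆ A ∧ 1 ≤ k with hP
      haveI : DecidablePred P := Classical.decPred _
      set k := Nat.findGreatest P m with hk
      have hP1 : P 1 := ⟨by rw [stk_one]; simp [hcl], le_refl 1⟩
      have h1k : 1 ≤ k := Nat.le_findGreatest (by omega) hP1
      have hspec : P k := Nat.findGreatest_spec (by omega : 1 ≤ m) hP1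
      obtain ⟨hsub, -⟩ := hspec
      have harc : (k, m - (k - 1)) ∈ A := hsub (by
        rw [mem_stk]
        exact ⟨k - 1, by omega, by simp only [Prod.mk.injEq, and_true, true_and]; omega⟩)
      have hwa := hC.1.1 _ harc
      have h2k : 2 * k + 1 ≤ m := by simp only at hwa; omega
      have hkm : k ≤ m := Nat.findGreatest_le m
      have hmax : (k + 1, m - k) ∉ A := by
        intro hcon
        have hPk1 : P (k + 1) := ⟨by
          rw [stk_succ]; exact Finset.insert_subset hcon hsub, by omega⟩
        exact Nat.findGreatest_is_greatest (by omega : k < k + 1) (by omega) hPk1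
      have hrk : r ≤ k := by
        obtain ⟨s, t, hst, hu, hd⟩ := hC.2 _ hcl
        have hs0 : s = 0 := by
          by_contra hs
          have h1 := hu 1 (by omega)
          have := hC.1.1 _ h1
          simp only at this
          omega
        have hsub' : stk (t + 1) m ⊆ A := by
          intro p hp
          rw [mem_stk] at hp
          obtain ⟨i, hit, rfl⟩ := hp
          have hmem := hd i (by omega)
          simp only at hmem
          rw [show i + 1 = 1 + i by omega]
          exact hmem
        have htm : t + 1 ≤ m := by
          have := hC.1.1 _ (hd t (le_refl t))
          simp only at this
          omega
        have := Nat.le_findGreatest (P := P) (n := m) htm ⟨hsub', by omega⟩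
        omega
      exact Finset.mem_biUnion.2 ⟨k, Finset.mem_Icc.2 ⟨hrk, hkm⟩,
        Finset.mem_filter.2 ⟨hS, hsub, hmax⟩⟩
    · intro hA
      obtain ⟨k, hk, hAk⟩ := Finset.mem_biUnion.1 hA
      obtain ⟨hS, hsub, -⟩ := Finset.mem_filter.1 hAk
      obtain ⟨hrk, hkm⟩ := Finset.mem_Icc.1 hk
      refine Finset.mem_filter.2 ⟨hS, ?_⟩
      apply hsub
      rw [mem_stk]
      exact ⟨0, by omega, by simp⟩
  have hdisjkk : ∀ x ∈ Finset.Icc r m, ∀ y ∈ Finset.Icc r m, x ≠ y →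
      Disjoint ((SSet r m).filter (fun A => stk x m ⊆ A ∧ (x + 1, m - x) ∉ A))
        ((SSet r m).filter (fun A => stk y m ⊆ A ∧ (y + 1, m - y) ∉ A)) := by
    intro x hx y hy hxy
    rw [Finset.disjoint_left]
    intro A hAx hAy
    obtain ⟨-, hsubx, hmaxx⟩ := Finset.mem_filter.1 hAx
    obtain ⟨-, hsuby, hmaxy⟩ := Finset.mem_filter.1 hAy
    rcases lt_or_gt_of_ne hxy with h | h
    · exact hmaxx (hsuby (by rw [mem_stk]; exact ⟨x, h, rfl⟩))
    · exact hmaxy (hsubx (by rw [mem_stk]; exact ⟨y, h, rfl⟩))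
  have hfib : ∀ k ∈ Finset.Icc r m,
      ((SSet r m).filter (fun A => stk k m ⊆ A ∧ (k + 1, m - k) ∉ A)).card
        = dd r (m - 2 * k) := by
    intro k hk
    obtain ⟨hrk, hkm⟩ := Finset.mem_Icc.1 hk
    by_cases h2k : 2 * k + 1 ≤ m
    · rw [dd, if_neg (by omega)]
      refine Finset.card_bij' (fun A _ => (A \ stk k m).image (down k))
        (fun B _ => stk k m ∪ B.image (up k)) ?hi ?hj ?li ?ri
      case hi =>
        intro A hA
        obtain ⟨hS, hsub, hmax⟩ := Finset.mem_filter.1 hA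
        have hC := mem_SSet.1 hS
        have hpeel := stack_peel hC hsub hmax h2k (by omega)
        have h' : CanW r (1 + k) ((m - 2 * k) + k) (A \ stk k m) := by
          rw [show m - 2 * k + k = m - k by omega]
          exact canW_mono hpeel (by omega) (le_refl _)
        have hdown := canW_down k (le_refl 1) h'
        refine Finset.mem_filter.2 ⟨mem_SSet.2 hdown, ?_⟩
        intro hconm
        obtain ⟨q, hq, hqe⟩ := Finset.mem_image.1 hconm
        obtain ⟨hqA, hqns⟩ := Finset.mem_sdiff.1 hq
        have hconf := stack_conf hC hsub h2k q hqA hqns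
        have hqw := hC.1.1 q hqA
        have hqeq : q = (k + 1, m - k) := by
          obtain ⟨x, y⟩ := q
          simp only [down, Prod.mk.injEq] at hqe ⊢
          simp only at hconf hqw
          omega
        rw [hqeq] at hqA
        exact hmax hqA
      case hj =>
        intro B hB
        obtain ⟨hBS, hBnc⟩ := Finset.mem_filter.1 hB
        have hBC := mem_SSet.1 hBS
        have hupC : CanW r (1 + k) ((m - 2 * k) + k) (B.image (up k)) :=
          canW_up k (le_refl 1) hBC
        rw [show m - 2 * k + k = m - k by omega, Nat.add_comm 1 k] at hupC
        have hj1 : CanW r 1 m (stk k m ∪ B.image (up k)) :=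
          stack_join hrk (by omega) h2k hupC
        refine Finset.mem_filter.2 ⟨mem_SSet.2 hj1, Finset.subset_union_left, ?_⟩
        intro hcon
        rcases Finset.mem_union.1 hcon with h | h
        · rw [mem_stk] at h
          obtain ⟨i, hik, hie⟩ := h
          simp only [Prod.mk.injEq] at hie
          omega
        · obtain ⟨q, hq, hqe⟩ := Finset.mem_image.1 h
          have hqw := hBC.1.1 q hq
          have hqeq : q = (1, m - 2 * k) := by
            obtain ⟨x, y⟩ := q
            simp only [up, Prod.mk.injEq] at hqe ⊢
            simp only at hqw
            omega
          rw [hqeq] at hq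
          exact hBnc hq
      case li =>
        intro A hA
        obtain ⟨hS, hsub, hmax⟩ := Finset.mem_filter.1 hA
        have hC := mem_SSet.1 hS
        have hconf := stack_conf hC hsub h2k
        show stk k m ∪ ((A \ stk k m).image (down k)).image (up k) = A
        rw [image_up_down k (fun p hp => by
          obtain ⟨hpA, hpns⟩ := Finset.mem_sdiff.1 hp
          have h1 := hconf p hpA hpns
          have h2 := hC.1.1 p hpA
          omega)]
        exact Finset.union_sdiff_of_subset hsub
      case ri =>
        intro B hB
        have hBC := mem_SSet.1 (Finset.mem_filter.1 hB).1
        have hdisjBS : Disjoint (stk k m) (B.image (up k)) := by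
          rw [Finset.disjoint_left]
          intro p hp hp'
          rw [mem_stk] at hp
          obtain ⟨i, hik, rfl⟩ := hp
          obtain ⟨q, hq, hqe⟩ := Finset.mem_image.1 hp'
          have := hBC.1.1 q hq
          simp only [up, Prod.mk.injEq] at hqe
          omega
        show ((stk k m ∪ B.image (up k)) \ stk k m).image (down k) = B
        rw [Finset.union_sdiff_cancel_left hdisjBS]
        exact image_down_up k B
    · have hfe : (SSet r m).filter (fun A => stk k m ⊆ A ∧ (k + 1, m - k) ∉ A) = ∅ := by
        rw [Finset.eq_empty_iff_forall_notMem]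
        intro A hA
        obtain ⟨hS, hsub, -⟩ := Finset.mem_filter.1 hA
        have hC := mem_SSet.1 hS
        have harc : (k, m - (k - 1)) ∈ A := hsub (by
          rw [mem_stk]
          exact ⟨k - 1, by omega, by simp only [Prod.mk.injEq, and_true, true_and]; omega⟩)
        have := hC.1.1 _ harc
        simp only at this
        omega
      rw [hfe, Finset.card_empty, dd, if_pos (by omega)]
  have hstep : cc r m = ∑ k ∈ Finset.Icc r m, dd r (m - 2 * k) := by
    rw [cc]
    conv_lhs => rw [hsplit]
    rw [Finset.card_biUnion hdisjkk]
    exact Finset.sum_congr rfl hfib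
  rw [hstep]
  have hgam : ∀ j ∈ Finset.range (m + 1), gam r j * dd r (m - j)
      = if 2 * r ≤ j ∧ Even j then dd r (m - j) else 0 := by
    intro j _
    rw [gam]
    split <;> simp
  rw [Finset.sum_congr rfl hgam, ← Finset.sum_filter]
  have hsub2 : (Finset.Icc r m).filter (fun k => 2 * k ≤ m) ⊆ Finset.Icc r m :=
    Finset.filter_subset _ _
  rw [← Finset.sum_subset hsub2 (fun k hk hk' => by
    simp only [Finset.mem_filter, Finset.mem_Icc] at hk hk'
    rw [show m - 2 * k = 0 by omega, dd, if_pos rfl])]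
  refine Finset.sum_nbij' (fun k => 2 * k) (fun j => j / 2) ?_ ?_ ?_ ?_ ?_
  · intro a ha
    simp only [Finset.mem_filter, Finset.mem_Icc, Finset.mem_range] at ha ⊢
    refine ⟨by omega, by omega, even_two_mul a⟩
  · intro j hj
    simp only [Finset.mem_filter, Finset.mem_Icc, Finset.mem_range, Nat.even_iff] at hj ⊢
    omega
  · intro a ha
    show 2 * a / 2 = a
    omega
  · intro j hj
    simp only [Finset.mem_filter, Finset.mem_range, Nat.even_iff] at hj
    show 2 * (j / 2) = j
    omega
  · intro a ha
    rfl


lemma conv_bound {u v : ℕ → ℝ} (hu : ∀ n, 0 ≤ u n) (hv : ∀ n, 0 ≤ v n)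
    {x : ℝ} (hx : 0 ≤ x) (K N : ℕ) (hK : ∀ j, j < K → u j = 0) :
    ∑ n ∈ Finset.range N, (∑ j ∈ Finset.range (n + 1), u j * v (n - j)) * x ^ n
      ≤ (∑ j ∈ Finset.range N, u j * x ^ j) * (∑ b ∈ Finset.range (N - K), v b * x ^ b) := by
  classical
  have step1 : ∀ n ∈ Finset.range N, (∑ j ∈ Finset.range (n + 1), u j * v (n - j)) * x ^ n
      = ∑ j ∈ Finset.range (n + 1), (u j * x ^ j) * (v (n - j) * x ^ (n - j)) := by
    intro n _
    rw [Finset.sum_mul]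
    refine Finset.sum_congr rfl (fun j hj => ?_)
    have hjn : j ≤ n := by
      have := Finset.mem_range.1 hj; omega
    have hp : x ^ n = x ^ j * x ^ (n - j) := by
      rw [← pow_add]; congr 1; omega
    rw [hp]; ring
  rw [Finset.sum_congr rfl step1, Finset.sum_sigma']
  set S := ((Finset.range N).sigma (fun n => Finset.range (n + 1))).filter
    (fun p => K ≤ p.2) with hS
  have e1 : ∑ p ∈ (Finset.range N).sigma (fun n => Finset.range (n + 1)),
      (u p.2 * x ^ p.2) * (v (p.1 - p.2) * x ^ (p.1 - p.2))
      = ∑ p ∈ S, (u p.2 * x ^ p.2) * (v (p.1 - p.2) * x ^ (p.1 - p.2)) := by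
    refine (Finset.sum_subset (Finset.filter_subset _ _) ?_).symm
    intro p hp hp'
    have : ¬ K ≤ p.2 := by
      intro h
      exact hp' (Finset.mem_filter.2 ⟨hp, h⟩)
    rw [hK p.2 (by omega), zero_mul, zero_mul]
  rw [e1]
  have e2 : ∑ p ∈ S, (u p.2 * x ^ p.2) * (v (p.1 - p.2) * x ^ (p.1 - p.2))
      = ∑ q ∈ ((Finset.range N) ×ˢ (Finset.range (N - K))).filter
          (fun q => q.1 + q.2 < N ∧ K ≤ q.1),
        (u q.1 * x ^ q.1) * (v q.2 * x ^ q.2) := by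
    refine Finset.sum_nbij' (fun p => (p.2, p.1 - p.2)) (fun q => ⟨q.1 + q.2, q.1⟩)
      ?_ ?_ ?_ ?_ ?_
    · intro p hp
      obtain ⟨hp1, hp2⟩ := Finset.mem_filter.1 hp
      have := Finset.mem_sigma.1 hp1
      simp only [Finset.mem_range] at this
      simp only [Finset.mem_filter, Finset.mem_product, Finset.mem_range]
      obtain ⟨h1, h2⟩ := this
      refine ⟨⟨by omega, by omega⟩, by omega, by omega⟩
    · intro q hq
      obtain ⟨hq1, hq2⟩ := Finset.mem_filter.1 hq
      simp only [Finset.mem_product, Finset.mem_range] at hq1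
      refine Finset.mem_filter.2 ⟨Finset.mem_sigma.2 ⟨?_, ?_⟩, ?_⟩
      · simp only [Finset.mem_range]; omega
      · simp only [Finset.mem_range]; omega
      · simpa using hq2.2
    · intro p hp
      obtain ⟨hp1, hp2⟩ := Finset.mem_filter.1 hp
      have hmem := Finset.mem_sigma.1 hp1
      simp only [Finset.mem_range] at hmem
      obtain ⟨n, j⟩ := p
      simp only at hmem ⊢
      rw [show j + (n - j) = n by omega]
    · intro q hq
      obtain ⟨a, b⟩ := q
      simp only [Prod.mk.injEq]
      exact ⟨trivial, by omega⟩
    · intro p hp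
      rfl
  rw [e2]
  calc ∑ q ∈ ((Finset.range N) ×ˢ (Finset.range (N - K))).filter
          (fun q => q.1 + q.2 < N ∧ K ≤ q.1),
        (u q.1 * x ^ q.1) * (v q.2 * x ^ q.2)
      ≤ ∑ q ∈ (Finset.range N) ×ˢ (Finset.range (N - K)),
        (u q.1 * x ^ q.1) * (v q.2 * x ^ q.2) := by
        refine Finset.sum_le_sum_of_subset_of_nonneg (Finset.filter_subset _ _) ?_
        intro q _ _
        have := hu q.1; have := hv q.2
        positivity
    _ = (∑ j ∈ Finset.range N, u j * x ^ j) * (∑ b ∈ Finset.range (N - K), v b * x ^ b) := by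
        rw [Finset.sum_mul_sum, Finset.sum_product]

lemma geo_bound {x : ℝ} (h0 : 0 ≤ x) (h1 : x < 1) (N : ℕ) :
    ∑ n ∈ Finset.range N, x ^ n ≤ 1 / (1 - x) := by
  have hne : x ≠ 1 := by linarith
  rw [geom_sum_eq hne]
  have hd : 0 < 1 - x := by linarith
  have he : (x ^ N - 1) / (x - 1) = (1 - x ^ N) / (1 - x) := by
    rw [div_eq_div_iff (by linarith) (by linarith)]
    ring
  rw [he]
  have hp : 0 ≤ x ^ N := pow_nonneg h0 N
  exact (div_le_div_iff_of_pos_right hd).2 (by linarith)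

lemma gam_sum_le {r : ℕ} (hr : 1 ≤ r) {x : ℝ} (h0 : 0 ≤ x) (h1 : x < 1) (M : ℕ) :
    ∑ l ∈ Finset.range M, (gam r l : ℝ) * x ^ l ≤ x ^ 2 / (1 - x) := by
  classical
  have step1 : ∑ l ∈ Finset.range M, (gam r l : ℝ) * x ^ l
      ≤ ∑ l ∈ Finset.range M, (if 2 ≤ l then x ^ l else 0) := by
    refine Finset.sum_le_sum (fun l _ => ?_)
    rw [gam]
    split
    · rename_i h
      rw [if_pos (by omega)]
      simp
    · simp only [Nat.cast_zero, zero_mul]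
      split
      · positivity
      · exact le_refl 0
  refine step1.trans ?_
  rw [← Finset.sum_filter]
  have step2 : ∑ l ∈ (Finset.range M).filter (fun l => 2 ≤ l), x ^ l
      = ∑ i ∈ Finset.range (M - 2), x ^ 2 * x ^ i := by
    refine Finset.sum_nbij' (fun l => l - 2) (fun i => i + 2) ?_ ?_ ?_ ?_ ?_
    · intro l hl
      simp only [Finset.mem_filter, Finset.mem_range] at hl
      show l - 2 ∈ Finset.range (M - 2)
      simp only [Finset.mem_range]
      omega
    · intro i hi
      simp only [Finset.mem_range] at hi
      show i + 2 ∈ (Finset.range M).filter (fun l => 2 ≤ l)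
      simp only [Finset.mem_filter, Finset.mem_range]
      omega
    · intro l hl
      simp only [Finset.mem_filter, Finset.mem_range] at hl
      show l - 2 + 2 = l
      omega
    · intro i _
      show i + 2 - 2 = i
      omega
    · intro l hl
      simp only [Finset.mem_filter, Finset.mem_range] at hl
      show x ^ l = x ^ 2 * x ^ (l - 2)
      rw [← pow_add]
      congr 1
      omega
  rw [step2, ← Finset.mul_sum]
  rw [div_eq_mul_one_div]
  refine mul_le_mul_of_nonneg_left ?_ (by positivity)
  exact geo_bound h0 h1 _


lemma sum_sc_le (r : ℕ) (hr : 1 ≤ r) :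
    ∀ N : ℕ, ∑ n ∈ Finset.range N, (sc r n : ℝ) * (1/9 : ℝ) ^ n ≤ 2 := by
  intro N
  induction N using Nat.strong_induction_on with
  | _ N ih =>
    match N, ih with
    | 0, _ => simp
    | (N + 1), ih =>
      set x : ℝ := 1/9 with hxdef
      have h0 : (0:ℝ) ≤ x := by norm_num [hxdef]
      have h1 : x < 1 := by norm_num [hxdef]
      rw [Finset.sum_range_succ']
      have hf0 : (sc r 0 : ℝ) * x ^ 0 = 1 := by rw [sc_zero]; norm_num
      rw [hf0]
      have key : ∀ i ∈ Finset.range N, (sc r (i+1) : ℝ) * x ^ (i+1)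
          = (sc r i : ℝ) * x ^ (i+1)
            + (∑ j ∈ Finset.range (i+2), (cc r j : ℝ) * (sc r (i+1-j) : ℝ)) * x ^ (i+1) := by
        intro i _
        have hrec := rec1 r (i+1) (by omega)
        rw [Nat.add_sub_cancel] at hrec
        have hc : (sc r (i+1) : ℝ) = (sc r i : ℝ)
            + ∑ j ∈ Finset.range (i+2), (cc r j:ℝ) * (sc r (i+1-j):ℝ) := by
          rw [hrec]; push_cast; ring
        rw [hc, add_mul]
      rw [Finset.sum_congr rfl key, Finset.sum_add_distrib]
      have hA : ∑ i ∈ Finset.range N, (sc r i : ℝ) * x ^ (i+1) ≤ x * 2 := by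
        have he : ∀ i ∈ Finset.range N, (sc r i : ℝ) * x ^ (i+1)
            = x * ((sc r i : ℝ) * x ^ i) := by
          intro i _
          rw [pow_succ]; ring
        rw [Finset.sum_congr rfl he, ← Finset.mul_sum]
        exact mul_le_mul_of_nonneg_left (ih N (by omega)) h0
      have hB : ∑ i ∈ Finset.range N,
          (∑ j ∈ Finset.range (i+2), (cc r j:ℝ)*(sc r (i+1-j):ℝ)) * x^(i+1) ≤ 1/18 := by
        have hCnn : ∀ n : ℕ, (0:ℝ) ≤ (∑ j ∈ Finset.range (n+1), (cc r j : ℝ) * (sc r (n - j) : ℝ)) * x ^ n := by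
          intro n
          apply mul_nonneg ?_ (pow_nonneg h0 n)
          exact Finset.sum_nonneg (fun j _ => mul_nonneg (Nat.cast_nonneg _) (Nat.cast_nonneg _))
        have hext : ∑ i ∈ Finset.range N,
            (∑ j ∈ Finset.range (i+2), (cc r j:ℝ)*(sc r (i+1-j):ℝ)) * x^(i+1)
            ≤ ∑ n ∈ Finset.range (N+1),
            (∑ j ∈ Finset.range (n+1), (cc r j:ℝ)*(sc r (n-j):ℝ)) * x^n := by
          rw [Finset.sum_range_succ'
            (fun n => (∑ j ∈ Finset.range (n+1), (cc r j:ℝ)*(sc r (n-j):ℝ)) * x^n) N]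
          have h00 := hCnn 0
          nlinarith [h00]
        refine hext.trans ?_
        have hcb := conv_bound (u := fun j => (cc r j : ℝ)) (v := fun b => (sc r b : ℝ))
          (fun n => Nat.cast_nonneg _) (fun n => Nat.cast_nonneg _) h0 3 (N+1)
          (fun j hj => by show ((cc r j : ℕ) : ℝ) = 0; rw [cc_small (by omega : j ≤ 2)]; norm_num)
        refine hcb.trans ?_
        have hfac2 : ∑ b ∈ Finset.range (N+1-3), (sc r b:ℝ) * x^b ≤ 2 := ih (N+1-3) (by omega)
        have hfac2nn : (0:ℝ) ≤ ∑ b ∈ Finset.range (N+1-3), (sc r b:ℝ) * x^b :=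
          Finset.sum_nonneg (fun b _ => mul_nonneg (Nat.cast_nonneg _) (pow_nonneg h0 b))
        have hfac1 : ∑ j ∈ Finset.range (N+1), (cc r j : ℝ) * x^j ≤ 1/36 := by
          have hcc : ∀ j ∈ Finset.range (N+1), (cc r j : ℝ) * x ^ j
              = (∑ l ∈ Finset.range (j+1), (gam r l : ℝ) * (dd r (j - l) : ℝ)) * x ^ j := by
            intro j _
            rw [rec2 r j hr]
            push_cast
            ring
          rw [Finset.sum_congr rfl hcc]
          have hcb2 := conv_bound (u := fun l => (gam r l : ℝ)) (v := fun b => (dd r b : ℝ))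
            (fun n => Nat.cast_nonneg _) (fun n => Nat.cast_nonneg _) h0 2 (N+1)
            (fun l hl => by
              show ((gam r l : ℕ) : ℝ) = 0
              rw [gam, if_neg (by intro hcon; have := hcon.1; omega)]
              norm_num)
          refine hcb2.trans ?_
          have g1 : ∑ l ∈ Finset.range (N+1), (gam r l : ℝ) * x ^ l ≤ x^2/(1-x) :=
            gam_sum_le hr h0 h1 _
          have g2 : ∑ b ∈ Finset.range (N+1-2), (dd r b : ℝ) * x ^ b ≤ 2 := by
            refine le_trans (Finset.sum_le_sum (fun b _ => ?_)) (ih (N+1-2) (by omega))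
            exact mul_le_mul_of_nonneg_right (by exact_mod_cast dd_le r b) (pow_nonneg h0 b)
          have g2nn : (0:ℝ) ≤ ∑ b ∈ Finset.range (N+1-2), (dd r b : ℝ) * x ^ b :=
            Finset.sum_nonneg (fun b _ => mul_nonneg (Nat.cast_nonneg _) (pow_nonneg h0 b))
          have hx2 : (0:ℝ) ≤ x^2/(1-x) := by positivity
          calc (∑ l ∈ Finset.range (N+1), (gam r l : ℝ) * x ^ l)
              * (∑ b ∈ Finset.range (N+1-2), (dd r b : ℝ) * x ^ b)
              ≤ (x^2/(1-x)) * 2 := mul_le_mul g1 g2 g2nn hx2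
            _ ≤ 1/36 := by rw [hxdef]; norm_num
        calc (∑ j ∈ Finset.range (N+1), (cc r j : ℝ) * x^j)
            * (∑ b ∈ Finset.range (N+1-3), (sc r b:ℝ) * x^b)
            ≤ (1/36) * 2 := mul_le_mul hfac1 hfac2 hfac2nn (by norm_num)
          _ = 1/18 := by norm_num
      simp only [hxdef] at hA hB ⊢
      linarith [hA, hB]

lemma sc_coeff_le (r : ℕ) (hr : 1 ≤ r) (n : ℕ) : (sc r n : ℝ) ≤ 2 * 9 ^ n := by
  have h := sum_sc_le r hr (n+1)
  have hterm : (sc r n : ℝ) * (1/9:ℝ)^n ≤ 2 := by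
    refine le_trans ?_ h
    refine Finset.single_le_sum (f := fun i => (sc r i:ℝ)*(1/9:ℝ)^i) ?_ (Finset.self_mem_range_succ n)
    intro i _
    positivity
  have hkey : ((1:ℝ)/9)^n * 9^n = 1 := by
    rw [← mul_pow]
    norm_num
  calc (sc r n : ℝ) = ((sc r n : ℝ) * (1/9:ℝ)^n) * 9^n := by
        rw [mul_assoc, hkey, mul_one]
    _ ≤ 2 * 9^n := mul_le_mul_of_nonneg_right hterm (by positivity)


lemma summable_coeff {z : ℝ} (h0 : 0 ≤ z) (h1 : z < 1/9) (f : ℕ → ℕ) (C : ℝ)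
    (hf : ∀ n, (f n : ℝ) ≤ C * 9 ^ n) : Summable (fun n => (f n : ℝ) * z ^ n) := by
  have h9 : (0:ℝ) ≤ 9 * z := by linarith
  have h91 : 9 * z < 1 := by linarith
  refine Summable.of_nonneg_of_le (fun n => by positivity) (fun n => ?_)
    ((summable_geometric_of_lt_one h9 h91).mul_left C)
  calc (f n : ℝ) * z ^ n ≤ (C * 9 ^ n) * z ^ n :=
        mul_le_mul_of_nonneg_right (hf n) (pow_nonneg h0 n)
    _ = C * (9 * z) ^ n := by rw [mul_pow]; ring

lemma gam_le (r n : ℕ) : ((gam r n : ℕ) : ℝ) ≤ 1 * 9 ^ n := by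
  rw [gam]
  have h9 : (1:ℝ) ≤ 9 ^ n := by
    calc (1:ℝ) = 1^n := (one_pow n).symm
    _ ≤ 9^n := pow_le_pow_left₀ (by norm_num) (by norm_num) n
  split <;> simp <;> linarith

lemma gam_tsum (r : ℕ) (hr : 1 ≤ r) {z : ℝ} (h0 : 0 < z) (h1 : z < 1/9) :
    ∑' n, (gam r n : ℝ) * z ^ n = z ^ (2*r) / (1 - z^2) := by
  have hz1 : z < 1 := by linarith
  have hinj : Function.Injective (fun k : ℕ => 2*r + 2*k) := by
    intro a b h
    simp only at h
    omega
  have hsupp : Function.support (fun n => (gam r n : ℝ) * z ^ n)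
      ⊆ Set.range (fun k : ℕ => 2*r + 2*k) := by
    intro n hn
    simp only [Function.mem_support] at hn
    have hg : gam r n ≠ 0 := by
      intro h
      rw [h] at hn
      simp at hn
    rw [gam] at hg
    by_cases hc : 2 * r ≤ n ∧ Even n
    · obtain ⟨c, hc2⟩ := hc.2
      have hc1 := hc.1
      exact ⟨(n - 2*r)/2, by simp only; omega⟩
    · rw [if_neg hc] at hg; exact absurd rfl hg
  rw [← hinj.tsum_eq hsupp]
  have hval : ∀ k : ℕ, (gam r (2*r + 2*k) : ℝ) * z ^ (2*r + 2*k)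
      = z ^ (2*r) * (z^2) ^ k := by
    intro k
    rw [gam, if_pos ⟨by omega, ⟨r + k, by ring⟩⟩]
    rw [pow_add, ← pow_mul]
    norm_num
  rw [tsum_congr hval, tsum_mul_left,
    tsum_geometric_of_lt_one (by positivity) (by nlinarith), div_eq_mul_inv]


lemma endgame {z w F : ℝ} (hz0 : 0 < z) (hz1 : z < 1/10) (hw0 : 0 < w) (hwle : w ≤ z^2)
    (hF1 : 1 ≤ F) (hFle : F ≤ 20)
    (hquad : w*F^2 - (w - (z-1)*(w - z^2 + 1))*F + (w - z^2 + 1) = 0) :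
    (w - (z-1)*(w - z^2 + 1) -
      Real.sqrt ((w - (z-1)*(w - z^2 + 1))^2 - 4*w*(w - z^2 + 1)))/(2*w) = F := by
  have hzz : z^2 ≤ 1/100 := by nlinarith
  have hF0 : (0:ℝ) ≤ F := by linarith
  have h2wF : 2 * w * F ≤ 40 * z^2 := by
    nlinarith [mul_nonneg (sub_nonneg.2 hwle) hF0,
      mul_nonneg (sq_nonneg z) (sub_nonneg.2 hFle)]
  have hb : (9/10 : ℝ) * (99/100) ≤ (1 - z)*(w - z^2 + 1) := by
    refine mul_le_mul (by linarith) (by nlinarith [hw0.le]) (by norm_num) (by linarith)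
  have hsign : 0 ≤ (w - (z-1)*(w - z^2 + 1)) - 2*w*F := by nlinarith [hb, h2wF, hw0.le]
  have hpr : (w - (z-1)*(w - z^2 + 1))^2 - 4*w*(w - z^2 + 1)
      = ((w - (z-1)*(w - z^2 + 1)) - 2*w*F)^2 := by
    linear_combination (-4*w) * hquad
  rw [hpr, Real.sqrt_sq hsign]
  have h2w : (2:ℝ)*w ≠ 0 := by positivity
  field_simp
  ring

theorem canonical_gf_aux (r : ℕ) (hr : 1 ≤ r) :
    ∀ z : ℝ, 0 < z → z < 1/10 →
      ∑' n : ℕ, (sc r n : ℝ) * z ^ n = SrFun r z := by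
  intro z hz0 hz1
  have hz9 : z < 1/9 := by linarith
  have hz0' : (0:ℝ) ≤ z := le_of_lt hz0
  have hz1' : z < 1 := by linarith
  -- summability
  have hFs : Summable (fun n => (sc r n : ℝ) * z ^ n) :=
    summable_coeff hz0' hz9 (sc r) 2 (fun n => sc_coeff_le r hr n)
  have hCs : Summable (fun n => (cc r n : ℝ) * z ^ n) :=
    summable_coeff hz0' hz9 (cc r) 2 (fun n => le_trans (by exact_mod_cast cc_le r n) (sc_coeff_le r hr n))
  have hDs : Summable (fun n => (dd r n : ℝ) * z ^ n) :=
    summable_coeff hz0' hz9 (dd r) 2 (fun n => le_trans (by exact_mod_cast dd_le r n) (sc_coeff_le r hr n))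
  have hGs : Summable (fun n => (gam r n : ℝ) * z ^ n) :=
    summable_coeff hz0' hz9 (gam r) 1 (fun n => gam_le r n)
  have hFn : Summable (fun n => ‖(sc r n : ℝ) * z ^ n‖) := by
    rw [summable_norm_iff]
    exact hFs
  have hCn : Summable (fun n => ‖(cc r n : ℝ) * z ^ n‖) := by
    rw [summable_norm_iff]
    exact hCs
  have hDn : Summable (fun n => ‖(dd r n : ℝ) * z ^ n‖) := by
    rw [summable_norm_iff]
    exact hDs
  have hGn : Summable (fun n => ‖(gam r n : ℝ) * z ^ n‖) := by
    rw [summable_norm_iff]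
    exact hGs
  set F := ∑' n, (sc r n : ℝ) * z ^ n with hFdef
  set C := ∑' n, (cc r n : ℝ) * z ^ n with hCdef
  set D := ∑' n, (dd r n : ℝ) * z ^ n with hDdef
  set G := ∑' n, (gam r n : ℝ) * z ^ n with hGdef
  -- identity: C = G * D
  have hCGD : G * D = C := by
    rw [hGdef, hDdef, hCdef]
    rw [tsum_mul_tsum_eq_tsum_sum_antidiagonal_of_summable_norm hGn hDn]
    refine tsum_congr (fun n => ?_)
    rw [Finset.Nat.sum_antidiagonal_eq_sum_range_succ_mk, rec2 r n hr]
    push_cast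
    rw [Finset.sum_mul]
    refine Finset.sum_congr rfl (fun j hj => ?_)
    have hjn : j ≤ n := by have := Finset.mem_range.1 hj; omega
    have hp : z ^ n = z ^ j * z ^ (n - j) := by
      rw [← pow_add]; congr 1; omega
    rw [hp]; ring
  -- identity: D = F - C - 1
  have hD : D = F - C - 1 := by
    have hterm : ∀ n : ℕ, (dd r n : ℝ) * z ^ n
        = (sc r n : ℝ) * z ^ n - (cc r n : ℝ) * z ^ n - (if n = 0 then (1:ℝ) else 0) := by
      intro n
      rcases Nat.eq_zero_or_pos n with h | h
      · subst h
        rw [dd, if_pos rfl, sc_zero, if_pos rfl]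
        have : cc r 0 = 0 := cc_small (by omega)
        rw [this]
        norm_num
      · have := cc_add_dd (r := r) (n := n) (by omega)
        rw [if_neg (by omega)]
        have hcast : (dd r n : ℝ) = (sc r n : ℝ) - (cc r n : ℝ) := by
          have h' : (cc r n : ℝ) + (dd r n : ℝ) = (sc r n : ℝ) := by exact_mod_cast this
          linarith
        rw [hcast]; ring
    rw [hDdef, tsum_congr hterm]
    have hIs : Summable (fun n : ℕ => if n = 0 then (1:ℝ) else 0) := by
      apply summable_of_finite_support
      apply Set.Finite.subset (Set.finite_singleton 0)
      intro n hn
      simp only [Function.mem_support] at hn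
      by_contra h
      exact hn (if_neg h)
    rw [Summable.tsum_sub (hFs.sub hCs) hIs, Summable.tsum_sub hFs hCs]
    congr 1
    exact tsum_ite_eq 0 (fun _ => (1:ℝ))
  -- identity: F = 1 + z*F + C*F
  have hconvs : Summable (fun n => ((∑ j ∈ Finset.range (n+1), cc r j * sc r (n - j) : ℕ) : ℝ) * z ^ n) := by
    refine summable_coeff hz0' hz9 _ 2 (fun n => ?_)
    have hle : (∑ j ∈ Finset.range (n+1), cc r j * sc r (n - j)) ≤ sc r n := by
      rcases Nat.eq_zero_or_pos n with h | h
      · subst h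
        simp [cc_small (show (0:ℕ) ≤ 2 by omega)]
      · have := rec1 r n (by omega)
        omega
    exact le_trans (by exact_mod_cast hle) (sc_coeff_le r hr n)
  have hCF : C * F = ∑' n, ((∑ j ∈ Finset.range (n+1), cc r j * sc r (n - j) : ℕ) : ℝ) * z ^ n := by
    rw [hCdef, hFdef]
    rw [tsum_mul_tsum_eq_tsum_sum_antidiagonal_of_summable_norm hCn hFn]
    refine tsum_congr (fun n => ?_)
    rw [Finset.Nat.sum_antidiagonal_eq_sum_range_succ_mk]
    push_cast
    rw [Finset.sum_mul]
    refine Finset.sum_congr rfl (fun j hj => ?_)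
    have hjn : j ≤ n := by have := Finset.mem_range.1 hj; omega
    have hp : z ^ n = z ^ j * z ^ (n - j) := by
      rw [← pow_add]; congr 1; omega
    rw [hp]; ring
  have hE1 : F = 1 + z * F + C * F := by
    have h1 : F = (sc r 0 : ℝ) * z ^ 0 + ∑' n, (sc r (n+1) : ℝ) * z ^ (n+1) := by
      rw [hFdef]; exact Summable.tsum_eq_zero_add hFs
    have hsplit : ∀ n : ℕ, (sc r (n+1) : ℝ) * z ^ (n+1)
        = z * ((sc r n : ℝ) * z ^ n)
          + ((∑ j ∈ Finset.range (n+2), cc r j * sc r (n+1-j) : ℕ) : ℝ) * z ^ (n+1) := by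
      intro n
      have hrec := rec1 r (n+1) (by omega)
      rw [Nat.add_sub_cancel] at hrec
      have : (sc r (n+1) : ℝ) = (sc r n : ℝ) + ((∑ j ∈ Finset.range (n+2), cc r j * sc r (n+1-j) : ℕ) : ℝ) := by
        rw [hrec]; push_cast; ring
      rw [this, add_mul, pow_succ]
      ring
    rw [tsum_congr hsplit] at h1
    have hs1 : Summable (fun n => z * ((sc r n : ℝ) * z ^ n)) := hFs.mul_left z
    have hs2 : Summable (fun n => ((∑ j ∈ Finset.range (n+2), cc r j * sc r (n+1-j) : ℕ) : ℝ) * z ^ (n+1)) := by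
      have := (summable_nat_add_iff 1).2 hconvs
      exact this
    rw [Summable.tsum_add hs1 hs2, tsum_mul_left] at h1
    have hshift : ∑' n, ((∑ j ∈ Finset.range (n+2), cc r j * sc r (n+1-j) : ℕ) : ℝ) * z ^ (n+1)
        = C * F := by
      rw [hCF]
      have := Summable.tsum_eq_zero_add hconvs
      rw [this]
      have h00 : ((∑ j ∈ Finset.range (0+1), cc r j * sc r (0 - j) : ℕ) : ℝ) * z ^ 0 = 0 := by
        simp [cc_small (show (0:ℕ) ≤ 2 by omega)]
      rw [h00, zero_add]
    rw [hshift, ← hFdef] at h1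
    rw [sc_zero] at h1
    push_cast at h1
    linarith [h1]
  -- solve
  have hzsq : z^2 < 1 := by nlinarith
  have hzs : (0:ℝ) < 1 - z^2 := by nlinarith
  have hGw : G * (1 - z^2) = z^(2*r) := by
    rw [hGdef, gam_tsum r hr hz0 hz9]
    field_simp
  have he1 : C * F = F - 1 - z * F := by linarith [hE1]
  have he2 : C * (1 + G) = G * (F - 1) := by
    have h := hCGD
    rw [hD] at h
    linear_combination -h
  have h4 : (F - 1 - z*F) * (1 + G) = G * (F - 1) * F := by
    have h3 := congrArg (fun t => t * F) he2
    rw [← he1]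
    linear_combination h3
  have h6 : (F - 1 - z*F) * ((1 - z^2) + z^(2*r)) = z^(2*r) * (F - 1) * F := by
    have h5 : (F - 1 - z*F) * ((1 - z^2) + G * (1 - z^2)) = G * (1 - z^2) * (F - 1) * F := by
      linear_combination (1 - z^2) * h4
    rw [hGw] at h5
    exact h5
  have hquad : z^(2*r) * F^2 - (z^(2*r) - (z - 1)*(z^(2*r) - z^2 + 1)) * F + (z^(2*r) - z^2 + 1) = 0 := by
    linear_combination -h6
  -- bounds for the sign of the square root
  have hF1 : (1:ℝ) ≤ F := by
    have := Summable.le_tsum hFs 0 (fun i _ => by positivity)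
    rw [sc_zero] at this
    simpa using this
  have hFle : F ≤ 20 := by
    have hgs : Summable (fun n : ℕ => 2 * (9*z) ^ n) :=
      (summable_geometric_of_lt_one (by linarith) (by linarith)).mul_left 2
    have hle : F ≤ ∑' n : ℕ, 2 * (9*z) ^ n := by
      rw [hFdef]
      refine Summable.tsum_le_tsum (fun n => ?_) hFs hgs
      calc (sc r n : ℝ) * z ^ n ≤ (2 * 9 ^ n) * z ^ n :=
            mul_le_mul_of_nonneg_right (sc_coeff_le r hr n) (pow_nonneg hz0' n)
        _ = 2 * (9*z) ^ n := by rw [mul_pow]; ring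
    have hgeo : ∑' n : ℕ, 2 * (9*z) ^ n = 2 * (1 - 9*z)⁻¹ := by
      rw [tsum_mul_left, tsum_geometric_of_lt_one (by linarith) (by linarith)]
    rw [hgeo] at hle
    have h10 : (1 - 9*z)⁻¹ ≤ 10 := by
      rw [inv_le_comm₀ (by linarith) (by norm_num)]
      linarith
    linarith
  have hw0 : (0:ℝ) < z^(2*r) := by positivity
  have hwle : z^(2*r) ≤ z^2 := pow_le_pow_of_le_one hz0' (by linarith) (by omega)
  have hfin := endgame hz0 hz1 hw0 hwle hF1 hFle hquad
  rw [SrFun, prPoly]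
  exact hfin.symm
end CanonGF


/-- The generating function of `r`-canonical secondary structures:
`S_r(z) = (z^{2r} − (z−1)(z^{2r}−z²+1) − √(p_r(z)))/(2z^{2r})`. -/
theorem canonical_gf (r : ℕ) (hr : 1 ≤ r) :
    ∃ ε : ℝ, 0 < ε ∧ ∀ z : ℝ, 0 < z → z < ε →
      ∑' n : ℕ, (srCount r n : ℝ) * z ^ n = SrFun r z := by
  refine ⟨1/10, by norm_num, fun z hz0 hz1 => ?_⟩
  have h := CanonGF.canonical_gf_aux r hr z hz0 hz1
  simp only [CanonGF.srCount_eq]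
  exact h
end
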